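/- arXiv:2212.06093 — 5 statements merged into one kernel-verified Lean document; each statement's English description precedes it below -/
import Mathlib

section
/- Let Ω_ℓ and Ω_{nℓ} be disjoint open bounded subsets of ℝ^N with Ω_{nℓ} δ-connected and dist(Ω_ℓ, Ω_{nℓ}) < δ (condition (P1)), and let J satisfy (J1) and (J2). Define L_{nℓ} : L²(Ω_ℓ) → L²(Ω_{nℓ}) by sending u to the unique solution v of the nonlocal problem with data (0, u). Then L_{nℓ} is additive and homogeneous (linear), and there is a constant C > 0 with ‖L_{nℓ}(u)‖_{L²(Ω_{nℓ})} ≤ C ‖u‖_{L²(Ω_ℓ)} for all u ∈ L²(Ω_ℓ); in particular L_{nℓ} is a bounded linear operator. -/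
open MeasureTheory Metric Filter
open scoped ENNReal NNReal RealInnerProductSpace Topology

variable {N : ℕ}

/-- An open set `D ⊆ ℝ^N` is `δ`-connected if it cannot be written as a disjoint union of
two nonempty (relatively) open sets that are at distance greater than or equal to `δ`. -/
def DeltaConnected {N : ℕ} (δ : ℝ) (D : Set (EuclideanSpace ℝ (Fin N))) : Prop :=
  ¬ ∃ A B : Set (EuclideanSpace ℝ (Fin N)),
      IsOpen A ∧ IsOpen B ∧ A.Nonempty ∧ B.Nonempty ∧
      A ∪ B = D ∧ A ∩ B = ∅ ∧ ∀ x ∈ A, ∀ y ∈ B, δ ≤ dist x y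

/-- From an a.e. property and a positive-measure set, find a common point. -/
lemma exists_point_of_ae {μ : Measure (EuclideanSpace ℝ (Fin N))} {P : EuclideanSpace ℝ (Fin N) → Prop}
    (hP : ∀ᵐ x ∂μ, P x) {s : Set (EuclideanSpace ℝ (Fin N))} (hs : 0 < μ s) :
    ∃ p ∈ s, P p := by
  have h1 : μ (s \ {x | P x}) = 0 := by
    apply measure_mono_null (t := {x | ¬ P x}) ?_ (by rw [ae_iff] at hP; exact hP)
    intro x hx; exact hx.2
  have h2 : 0 < μ (s ∩ {x | P x}) := by
    by_contra h
    push_neg at h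
    have := measure_le_inter_add_diff μ s {x | P x}
    rw [h1, le_antisymm h (zero_le)] at this
    rw [add_zero] at this
    exact absurd (le_antisymm this (zero_le)) hs.ne'
  obtain ⟨p, hp⟩ := nonempty_of_measure_ne_zero h2.ne'
  exact ⟨p, hp.1, hp.2⟩

/-- Construct an everywhere-good version of the kernel `J`. -/
lemma exists_goodJ {δ c M : ℝ} (hδ : 0 < δ) (hc : 0 < c) {J : EuclideanSpace ℝ (Fin N) → ℝ}
    (h0 : ∀ z, 0 ≤ J z) (hsymm : ∀ z, J (-z) = J z) (hM : ∀ z, J z ≤ M)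
    (hint : Integrable J) (h1 : ∀ z, ‖z‖ ≤ 2*δ → c ≤ J z) :
    ∃ K : EuclideanSpace ℝ (Fin N) → ℝ, Measurable K ∧ K =ᵐ[volume] J ∧ (∀ z, 0 ≤ K z)
      ∧ (∀ z, K z ≤ M) ∧ (∀ z, K (-z) = K z) ∧ (∀ z, ‖z‖ ≤ 2*δ → c ≤ K z) ∧ Integrable K := by
  have hcM : c ≤ M := le_trans (h1 0 (by simp; positivity)) (hM 0)
  have hM0 : (0:ℝ) ≤ M := le_trans hc.le hcM
  obtain ⟨J', hJ'm, hJ'ae⟩ : ∃ J' : EuclideanSpace ℝ (Fin N) → ℝ, Measurable J' ∧ J' =ᵐ[volume] J := by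
    refine ⟨hint.1.mk J, hint.1.stronglyMeasurable_mk.measurable, hint.1.ae_eq_mk.symm⟩
  have hneg : (fun z => J' (-z)) =ᵐ[volume] (fun z => J (-z)) := by
    have h := (Measure.measurePreserving_neg (volume : Measure (EuclideanSpace ℝ (Fin N)))).quasiMeasurePreserving.ae_eq_comp hJ'ae
    exact h
  set K : EuclideanSpace ℝ (Fin N) → ℝ := fun z =>
    if ‖z‖ ≤ 2*δ then min (max (min (J' z) (J' (-z))) c) M else min (max (min (J' z) (J' (-z))) 0) M with hK
  have hKm : Measurable K := by
    apply Measurable.ite (measurableSet_le (measurable_norm) measurable_const) <;>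
    · apply Measurable.min _ measurable_const
      apply Measurable.max _ measurable_const
      exact (hJ'm.min (hJ'm.comp measurable_neg))
  have hKae : K =ᵐ[volume] J := by
    filter_upwards [hJ'ae, hneg] with z h1' h2'
    simp only [hK]
    rw [h1', h2', hsymm, min_self]
    by_cases h : ‖z‖ ≤ 2*δ
    · rw [if_pos h, max_eq_left (h1 z h), min_eq_left (hM z)]
    · rw [if_neg h, max_eq_left (h0 z), min_eq_left (hM z)]
  refine ⟨K, hKm, hKae, ?_, ?_, ?_, ?_, hint.congr hKae.symm⟩
  · intro z; simp only [hK]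
    split_ifs
    · exact le_min (le_trans hc.le (le_max_right _ _)) hM0
    · exact le_min (le_max_right _ _) hM0
  · intro z; simp only [hK]; split_ifs <;> exact min_le_right _ _
  · intro z; simp only [hK, norm_neg, neg_neg, min_comm (J' (-z)) (J' z)]
  · intro z hz; simp only [hK, if_pos hz]
    exact le_min (le_max_right _ _) hcM



lemma uniq_aux {N : ℕ} {δ c M : ℝ} (hδ : 0 < δ) (hc : 0 < c)
    {Ωl Ωnl : Set (EuclideanSpace ℝ (Fin N))}
    (hΩl_open : IsOpen Ωl) (hΩnl_open : IsOpen Ωnl) (hΩnl_bdd : Bornology.IsBounded Ωnl)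
    (hdisj : Ωl ∩ Ωnl = ∅) (hconn : DeltaConnected δ Ωnl)
    (hP1 : ∃ x ∈ Ωl, ∃ y ∈ Ωnl, dist x y < δ)
    {K : EuclideanSpace ℝ (Fin N) → ℝ} (hKm : Measurable K) (hK0 : ∀ z, 0 ≤ K z)
    (hKM : ∀ z, K z ≤ M) (hKsymm : ∀ z, K (-z) = K z) (hK1 : ∀ z, ‖z‖ ≤ 2*δ → c ≤ K z)
    (hKint : Integrable K)
    (w : Lp ℝ 2 (volume.restrict Ωnl))
    (hw : ∀ᵐ x ∂(volume.restrict Ωnl),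
      ((∫ y in Ωnlᶜ, K (x - y)) + 2 * ∫ y in Ωnl, K (x - y)) * w x
        = 2 * ∫ y in Ωnl, K (x - y) * w y) :
    w = 0 := by
  have hM0 : (0:ℝ) ≤ M := le_trans (hK0 0) (hKM 0)
  revert w hw
  set μ : Measure (EuclideanSpace ℝ (Fin N)) := volume.restrict Ωnl with hμ
  intro w hw
  haveI : IsFiniteMeasure μ := by
    constructor
    rw [hμ, Measure.restrict_apply_univ]
    exact hΩnl_bdd.measure_lt_top
  set W : EuclideanSpace ℝ (Fin N) → ℝ := ⇑w with hW
  have hWsm : StronglyMeasurable W := Lp.stronglyMeasurable w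
  have hWm : Measurable W := hWsm.measurable
  have hWint : Integrable W μ := (Lp.memLp w).integrable one_le_two
  have hWsq : Integrable (fun x => W x ^ 2) μ := (Lp.memLp w).integrable_sq
  -- kernel on the product space
  have hFm : Measurable (fun z : _ × _ => K (z.1 - z.2)) :=
    hKm.comp (measurable_fst.sub measurable_snd)
  -- integrability on the product
  have hprod1 : Integrable (fun z : _ × _ => W z.1 * W z.2) (μ.prod μ) :=
    hWint.mul_prod hWint
  have hI3int : Integrable (fun z : _ × _ => K (z.1 - z.2) * (W z.1 * W z.2)) (μ.prod μ) :=
    hprod1.bdd_mul hFm.aestronglyMeasurable (Eventually.of_forall fun z => by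
      rw [Real.norm_eq_abs, abs_of_nonneg (hK0 _)]; exact hKM _)
  have hwsq1 : Integrable (fun z : _ × _ => W z.1 ^ 2) (μ.prod μ) := by
    have := hWsq.mul_prod (integrable_const (1:ℝ) (μ := μ))
    simpa using this
  have hwsq2 : Integrable (fun z : _ × _ => W z.2 ^ 2) (μ.prod μ) := by
    have := (integrable_const (1:ℝ) (μ := μ)).mul_prod hWsq
    simpa using this
  have hKsq1 : Integrable (fun z : _ × _ => K (z.1 - z.2) * W z.1 ^ 2) (μ.prod μ) :=
    hwsq1.bdd_mul hFm.aestronglyMeasurable (Eventually.of_forall fun z => by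
      rw [Real.norm_eq_abs, abs_of_nonneg (hK0 _)]; exact hKM _)
  have hKsq2 : Integrable (fun z : _ × _ => K (z.1 - z.2) * W z.2 ^ 2) (μ.prod μ) :=
    hwsq2.bdd_mul hFm.aestronglyMeasurable (Eventually.of_forall fun z => by
      rw [Real.norm_eq_abs, abs_of_nonneg (hK0 _)]; exact hKM _)
  have hQint : Integrable (fun z : _ × _ => K (z.1 - z.2) * (W z.1 - W z.2) ^ 2) (μ.prod μ) := by
    have hsq : Integrable (fun z : _ × _ => (W z.1 - W z.2) ^ 2) (μ.prod μ) := by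
      have h := (hwsq1.add hwsq2).sub (hprod1.const_mul 2)
      refine h.congr (Filter.Eventually.of_forall fun z => ?_)
      simp only [Pi.add_apply, Pi.sub_apply]
      ring
    exact hsq.bdd_mul hFm.aestronglyMeasurable (Eventually.of_forall fun z => by
      rw [Real.norm_eq_abs, abs_of_nonneg (hK0 _)]; exact hKM _)
  -- the auxiliary x-functions
  have hKx : ∀ x : EuclideanSpace ℝ (Fin N), Integrable (fun y => K (x - y)) volume := by
    intro x
    have h := (Measure.measurePreserving_sub_left (volume : Measure (EuclideanSpace ℝ (Fin N))) x).integrable_comp hKint.aestronglyMeasurable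
    exact h.mpr hKint
  set IJ : ℝ := ∫ z, K z with hIJ
  set bb : EuclideanSpace ℝ (Fin N) → ℝ := fun x => ∫ y in Ωnlᶜ, K (x - y) with hbb
  set jj : EuclideanSpace ℝ (Fin N) → ℝ := fun x => ∫ y, K (x - y) ∂μ with hjj
  set TT : EuclideanSpace ℝ (Fin N) → ℝ := fun x => ∫ y, K (x - y) * W y ∂μ with hTT
  have hbbm : StronglyMeasurable bb := by
    have : StronglyMeasurable (Function.uncurry fun x y => K (x - y)) :=
      hFm.stronglyMeasurable
    exact this.integral_prod_right
  have hjjm : StronglyMeasurable jj := by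
    have : StronglyMeasurable (Function.uncurry fun x y => K (x - y)) :=
      hFm.stronglyMeasurable
    exact this.integral_prod_right
  have hTTm : StronglyMeasurable TT := by
    have : StronglyMeasurable (Function.uncurry fun x y => K (x - y) * W y) :=
      (hFm.mul (hWm.comp measurable_snd)).stronglyMeasurable
    exact this.integral_prod_right
  have hbb0 : ∀ x, 0 ≤ bb x := fun x => integral_nonneg fun y => hK0 _
  have hjj0 : ∀ x, 0 ≤ jj x := fun x => integral_nonneg fun y => hK0 _
  have hbb_le : ∀ x, bb x ≤ IJ := by
    intro x
    calc bb x ≤ ∫ y, K (x - y) := setIntegral_le_integral (hKx x) (Eventually.of_forall fun y => hK0 _)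
    _ = IJ := by
        rw [hIJ]
        exact (Measure.measurePreserving_sub_left (volume : Measure (EuclideanSpace ℝ (Fin N))) x).integral_comp
          (MeasurableEquiv.subLeft x).measurableEmbedding K
  have hjj_le : ∀ x, jj x ≤ IJ := by
    intro x
    calc jj x ≤ ∫ y, K (x - y) := setIntegral_le_integral (hKx x) (Eventually.of_forall fun y => hK0 _)
    _ = IJ := by
        rw [hIJ]
        exact (Measure.measurePreserving_sub_left (volume : Measure (EuclideanSpace ℝ (Fin N))) x).integral_comp
          (MeasurableEquiv.subLeft x).measurableEmbedding K
  have hTTbd : ∀ x, |TT x| ≤ M * ∫ y, |W y| ∂μ := by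
    intro x
    calc |TT x| ≤ ∫ y, |K (x - y)| * |W y| ∂μ := by
          simpa [Real.norm_eq_abs] using norm_integral_le_integral_norm (fun y => K (x - y) * W y) (μ := μ)
    _ ≤ ∫ y, M * |W y| ∂μ := by
          refine integral_mono ?_ (hWint.abs.const_mul M) ?_
          · exact hWint.abs.bdd_mul ((hKm.comp (measurable_const.sub measurable_id)).abs.aestronglyMeasurable)
              (Eventually.of_forall fun y => by rw [Real.norm_eq_abs, abs_abs, abs_of_nonneg (hK0 _)]; exact hKM _)
          · intro y
            show |K (x - y)| * |W y| ≤ M * |W y|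
            rw [abs_of_nonneg (hK0 _)]
            exact mul_le_mul_of_nonneg_right (hKM _) (abs_nonneg _)
    _ = M * ∫ y, |W y| ∂μ := integral_const_mul M _
  -- integrability of the x-functions
  have int_bbW : Integrable (fun x => bb x * W x ^ 2) μ :=
    hWsq.bdd_mul hbbm.aestronglyMeasurable (Eventually.of_forall fun x => by
      rw [Real.norm_eq_abs, abs_of_nonneg (hbb0 x)]; exact hbb_le x)
  have int_jjW : Integrable (fun x => jj x * W x ^ 2) μ :=
    hWsq.bdd_mul hjjm.aestronglyMeasurable (Eventually.of_forall fun x => by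
      rw [Real.norm_eq_abs, abs_of_nonneg (hjj0 x)]; exact hjj_le x)
  have int_TTW : Integrable (fun x => TT x * W x) μ :=
    hWint.bdd_mul hTTm.aestronglyMeasurable (Eventually.of_forall fun x => by
      rw [Real.norm_eq_abs]; exact hTTbd x)
  -- the energy identities
  set I1 : ℝ := ∫ x, bb x * W x ^ 2 ∂μ with hI1
  set I2 : ℝ := ∫ x, jj x * W x ^ 2 ∂μ with hI2
  set I3 : ℝ := ∫ z, K (z.1 - z.2) * (W z.1 * W z.2) ∂(μ.prod μ) with hI3
  set Q : ℝ := ∫ z, K (z.1 - z.2) * (W z.1 - W z.2) ^ 2 ∂(μ.prod μ) with hQ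
  have hFub3 : ∫ x, TT x * W x ∂μ = I3 := by
    rw [hI3]
    have h := integral_integral (f := fun x y => K (x - y) * (W x * W y)) (μ := μ) (ν := μ) hI3int
    rw [← h]
    apply integral_congr_ae (Eventually.of_forall fun x => ?_)
    show TT x * W x = ∫ y, K (x - y) * (W x * W y) ∂μ
    rw [show (fun y => K (x - y) * (W x * W y)) = fun y => W x * (K (x - y) * W y) from
      funext fun y => by ring, integral_const_mul]
    rw [hTT]
    ring
  have hFub2 : ∫ z, K (z.1 - z.2) * W z.1 ^ 2 ∂(μ.prod μ) = I2 := by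
    have h := integral_integral (f := fun x y => K (x - y) * W x ^ 2) (μ := μ) (ν := μ) hKsq1
    rw [← h, hI2]
    apply integral_congr_ae (Eventually.of_forall fun x => ?_)
    show ∫ y, K (x - y) * W x ^ 2 ∂μ = jj x * W x ^ 2
    rw [integral_mul_const, hjj]
  have hswap : ∫ z, K (z.1 - z.2) * W z.2 ^ 2 ∂(μ.prod μ) = ∫ z, K (z.1 - z.2) * W z.1 ^ 2 ∂(μ.prod μ) := by
    have h := integral_prod_swap (μ := μ) (ν := μ) (f := fun z => K (z.1 - z.2) * W z.1 ^ 2)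
    rw [← h]
    apply integral_congr_ae (Eventually.of_forall fun z => ?_)
    show K (z.1 - z.2) * W z.2 ^ 2 = K (z.2 - z.1) * W z.2 ^ 2
    rw [← neg_sub z.2 z.1, hKsymm]
  -- the energy balance
  have h_en : I1 + 2 * I2 = 2 * I3 := by
    have hae : (fun x => bb x * W x ^ 2 + 2 * (jj x * W x ^ 2)) =ᵐ[μ] fun x => 2 * (TT x * W x) := by
      filter_upwards [hw] with x hx
      have hx' : (bb x + 2 * jj x) * W x = 2 * TT x := hx
      show bb x * W x ^ 2 + 2 * (jj x * W x ^ 2) = 2 * (TT x * W x)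
      nlinarith [congrArg (· * W x) hx']
    have h1 := integral_congr_ae hae
    rw [integral_add int_bbW (int_jjW.const_mul 2), integral_const_mul, integral_const_mul] at h1
    rw [hI1, hI2, ← hFub3]
    linarith
  have hQexp : Q = 2 * I2 - 2 * I3 := by
    have hptw : (fun z : _ × _ => K (z.1 - z.2) * (W z.1 - W z.2) ^ 2) =
        fun z : _ × _ => (K (z.1 - z.2) * W z.1 ^ 2 + K (z.1 - z.2) * W z.2 ^ 2)
          - 2 * (K (z.1 - z.2) * (W z.1 * W z.2)) := funext fun z => by ring
    have hadd : Integrable (fun z : _ × _ => K (z.1 - z.2) * W z.1 ^ 2 + K (z.1 - z.2) * W z.2 ^ 2)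
        (μ.prod μ) := hKsq1.add hKsq2
    have hc2 : Integrable (fun z : _ × _ => 2 * (K (z.1 - z.2) * (W z.1 * W z.2)))
        (μ.prod μ) := hI3int.const_mul 2
    rw [hQ, hptw, integral_sub hadd hc2, integral_add hKsq1 hKsq2, integral_const_mul, hswap,
      hFub2, ← hI3]
    ring
  have hI1nn : 0 ≤ I1 := integral_nonneg fun x => mul_nonneg (hbb0 x) (sq_nonneg _)
  have hQnn : 0 ≤ Q := integral_nonneg fun z => mul_nonneg (hK0 _) (sq_nonneg _)
  have hI1z : I1 = 0 := by linarith
  have hQz : Q = 0 := by linarith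
  -- pointwise consequences
  have h1 : ∀ᵐ x ∂μ, bb x * W x ^ 2 = 0 :=
    (integral_eq_zero_iff_of_nonneg_ae
      (Eventually.of_forall fun x => mul_nonneg (hbb0 x) (sq_nonneg _)) int_bbW).mp hI1z
  have h2 : ∀ᵐ z ∂(μ.prod μ), K (z.1 - z.2) * (W z.1 - W z.2) ^ 2 = 0 :=
    (integral_eq_zero_iff_of_nonneg_ae
      (Eventually.of_forall fun z => mul_nonneg (hK0 _) (sq_nonneg _)) hQint).mp hQz
  have hprodeq : ∀ᵐ z : _ × _ ∂(μ.prod μ), dist z.1 z.2 ≤ 2*δ → W z.2 = W z.1 := by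
    filter_upwards [h2] with z hz hd
    have hK : c ≤ K (z.1 - z.2) := hK1 _ (by rw [← dist_eq_norm]; exact hd)
    have hsq : (W z.1 - W z.2) ^ 2 = 0 := by
      rcases mul_eq_zero.mp hz with h | h
      · exact absurd h (lt_of_lt_of_le hc hK).ne'
      · exact h
    have := sub_eq_zero.mp ((pow_eq_zero_iff two_ne_zero).mp hsq)
    linarith
  have hPP : ∀ᵐ x ∂μ, ∀ᵐ y ∂μ, dist x y ≤ 2*δ → W y = W x :=
    Measure.ae_ae_of_ae_prod hprodeq
  -- positivity of balls centered in Ωnl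
  have hpos : ∀ x ∈ Ωnl, ∀ r : ℝ, 0 < r → 0 < μ (ball x r) := by
    intro x hx r hr
    obtain ⟨r₀, hr₀, hsubx⟩ := Metric.isOpen_iff.mp hΩnl_open x hx
    rw [hμ, Measure.restrict_apply measurableSet_ball]
    calc (0:ENNReal) < volume (ball x (min r r₀)) := measure_ball_pos _ _ (lt_min hr hr₀)
    _ ≤ volume (ball x r ∩ Ωnl) := measure_mono fun y hy =>
        ⟨ball_subset_ball (min_le_left _ _) hy, hsubx (ball_subset_ball (min_le_right _ _) hy)⟩
  -- the zero region coming from (P1)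
  obtain ⟨x₀, hx₀, y₀, hy₀, hd⟩ := hP1
  obtain ⟨r1', hr1', hsub1'⟩ := Metric.isOpen_iff.mp hΩl_open x₀ hx₀
  obtain ⟨r2', hr2', hsub2'⟩ := Metric.isOpen_iff.mp hΩnl_open y₀ hy₀
  set r1 := min r1' (δ/2) with hr1def
  set r2 := min r2' (δ/2) with hr2def
  have hr1pos : 0 < r1 := lt_min hr1' (by linarith)
  have hr2pos : 0 < r2 := lt_min hr2' (by linarith)
  have hsub1 : ball x₀ r1 ⊆ Ωl := (ball_subset_ball (min_le_left _ _)).trans hsub1'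
  have hsub2 : ball y₀ r2 ⊆ Ωnl := (ball_subset_ball (min_le_left _ _)).trans hsub2'
  have hΩlc : Ωl ⊆ Ωnlᶜ := fun z hz hz' => (Set.eq_empty_iff_forall_notMem.mp hdisj z) ⟨hz, hz'⟩
  set β := c * (volume (ball x₀ r1)).toReal with hβdef
  have hβ : 0 < β :=
    mul_pos hc (ENNReal.toReal_pos (measure_ball_pos _ _ hr1pos).ne' measure_ball_lt_top.ne)
  have hbblow : ∀ x ∈ ball y₀ r2, β ≤ bb x := by
    intro x hx
    have hxint : IntegrableOn (fun y => K (x - y)) Ωnlᶜ volume := (hKx x).integrableOn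
    have h1' : ∫ y in ball x₀ r1, K (x - y) ≤ bb x :=
      setIntegral_mono_set hxint (Eventually.of_forall fun y => hK0 _)
        ((hsub1.trans hΩlc).eventuallyLE)
    refine le_trans ?_ h1'
    rw [hβdef, mul_comm, ← smul_eq_mul, ← measureReal_def]
    apply setIntegral_ge_of_const_le measurableSet_ball measure_ball_lt_top.ne
    · intro y hy
      apply hK1
      rw [← dist_eq_norm]
      have e1 : dist x y₀ < r2 := mem_ball.mp hx
      have e2 : dist y x₀ < r1 := mem_ball.mp hy
      have e3 : r1 ≤ δ/2 := min_le_right _ _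
      have e4 : r2 ≤ δ/2 := min_le_right _ _
      calc dist x y ≤ dist x y₀ + dist y₀ x₀ + dist x₀ y := dist_triangle4 x y₀ x₀ y
      _ ≤ 2 * δ := by
          have c1 : dist y₀ x₀ = dist x₀ y₀ := dist_comm _ _
          have c2 : dist x₀ y = dist y x₀ := dist_comm _ _
          linarith
    · exact (hKx x).integrableOn
  have hzero : ∀ᵐ x ∂μ, x ∈ ball y₀ r2 → W x = 0 := by
    filter_upwards [h1] with x hx hmem
    have hb : 0 < bb x := lt_of_lt_of_le hβ (hbblow x hmem)
    have hsq : W x ^ 2 = 0 := by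
      rcases mul_eq_zero.mp hx with h | h
      · exact absurd h hb.ne'
      · exact h
    exact (pow_eq_zero_iff two_ne_zero).mp hsq
  -- the sets of local constancy
  set A : Set (EuclideanSpace ℝ (Fin N)) :=
    {x | ∃ ρ > 0, ball x ρ ⊆ Ωnl ∧ ∀ᵐ y ∂μ, y ∈ ball x ρ → W y = 0} with hAdef
  set B : Set (EuclideanSpace ℝ (Fin N)) :=
    {x | ∃ ρ > 0, ball x ρ ⊆ Ωnl ∧ ∃ t : ℝ, t ≠ 0 ∧ ∀ᵐ y ∂μ, y ∈ ball x ρ → W y = t} with hBdef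
  have hAsub : A ⊆ Ωnl := by
    rintro x ⟨ρ, hρ, hsub, -⟩; exact hsub (mem_ball_self hρ)
  have hBsub : B ⊆ Ωnl := by
    rintro x ⟨ρ, hρ, hsub, -⟩; exact hsub (mem_ball_self hρ)
  have hAopen : IsOpen A := by
    rw [Metric.isOpen_iff]
    rintro x ⟨ρ, hρ, hsub, hae⟩
    refine ⟨ρ/2, by linarith, fun x' hx' => ⟨ρ/2, by linarith, ?_, ?_⟩⟩
    · intro y hy
      apply hsub
      rw [mem_ball] at *
      calc dist y x ≤ dist y x' + dist x' x := dist_triangle _ _ _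
      _ < ρ := by linarith
    · filter_upwards [hae] with y hy hmem
      apply hy
      rw [mem_ball] at *
      calc dist y x ≤ dist y x' + dist x' x := dist_triangle _ _ _
      _ < ρ := by linarith
  have hBopen : IsOpen B := by
    rw [Metric.isOpen_iff]
    rintro x ⟨ρ, hρ, hsub, t, ht, hae⟩
    refine ⟨ρ/2, by linarith, fun x' hx' => ⟨ρ/2, by linarith, ?_, t, ht, ?_⟩⟩
    · intro y hy
      apply hsub
      rw [mem_ball] at *
      calc dist y x ≤ dist y x' + dist x' x := dist_triangle _ _ _
      _ < ρ := by linarith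
    · filter_upwards [hae] with y hy hmem
      apply hy
      rw [mem_ball] at *
      calc dist y x ≤ dist y x' + dist x' x := dist_triangle _ _ _
      _ < ρ := by linarith
  have hcover : ∀ x ∈ Ωnl, x ∈ A ∪ B := by
    intro x hx
    obtain ⟨r₀, hr₀, hsubx⟩ := Metric.isOpen_iff.mp hΩnl_open x hx
    have hρpos : 0 < min δ r₀ := lt_min hδ hr₀
    obtain ⟨p, hpmem, hΦp⟩ := exists_point_of_ae hPP (hpos x hx _ hρpos)
    have hball : ball x (min δ r₀) ⊆ Ωnl := (ball_subset_ball (min_le_right _ _)).trans hsubx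
    have hae' : ∀ᵐ y ∂μ, y ∈ ball x (min δ r₀) → W y = W p := by
      filter_upwards [hΦp] with y hy hmem
      apply hy
      rw [mem_ball] at hpmem hmem
      have c2 : dist x y = dist y x := dist_comm _ _
      have c3 : min δ r₀ ≤ δ := min_le_left _ _
      calc dist p y ≤ dist p x + dist x y := dist_triangle _ _ _
      _ ≤ 2 * δ := by linarith
    by_cases hWp : W p = 0
    · exact Or.inl ⟨_, hρpos, hball, by
        filter_upwards [hae'] with y h hm
        rw [h hm, hWp]⟩
    · exact Or.inr ⟨_, hρpos, hball, W p, hWp, hae'⟩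
  have hdistAB : ∀ x ∈ A, ∀ y ∈ B, δ ≤ dist x y := by
    rintro x ⟨ρ₁, hρ₁, hs₁, hae₁⟩ y ⟨ρ₂, hρ₂, hs₂, t, ht, hae₂⟩
    by_contra hcon
    push_neg at hcon
    set σ := (δ - dist x y)/2 with hσdef
    have hσpos : 0 < σ := by rw [hσdef]; linarith
    have hxΩ : x ∈ Ωnl := hs₁ (mem_ball_self hρ₁)
    have hyΩ : y ∈ Ωnl := hs₂ (mem_ball_self hρ₂)
    obtain ⟨p, hpmem, hΦp, hp0⟩ := exists_point_of_ae (hPP.and hae₁)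
      (hpos x hxΩ (min ρ₁ σ) (lt_min hρ₁ hσpos))
    have hWp : W p = 0 := hp0 (ball_subset_ball (min_le_left _ _) hpmem)
    obtain ⟨q, hqmem, hΦq, hqt⟩ := exists_point_of_ae (hPP.and hae₂)
      (hpos y hyΩ (min ρ₂ σ) (lt_min hρ₂ hσpos))
    have hWq : W q = t := hqt (ball_subset_ball (min_le_left _ _) hqmem)
    have hqΩ : q ∈ Ωnl := hs₂ (ball_subset_ball (min_le_left _ _) hqmem)
    have hpq : dist p q ≤ δ := by
      rw [mem_ball] at hpmem hqmem
      have h1' : dist p x < σ := lt_of_lt_of_le hpmem (min_le_right _ _)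
      have h2' : dist q y < σ := lt_of_lt_of_le hqmem (min_le_right _ _)
      have c1 : dist y q = dist q y := dist_comm _ _
      calc dist p q ≤ dist p x + dist x y + dist y q := dist_triangle4 _ _ _ _
      _ ≤ δ := by rw [hσdef] at h1' h2'; linarith
    obtain ⟨r₃, hr₃, hsubq⟩ := Metric.isOpen_iff.mp hΩnl_open q hqΩ
    have hρ₃pos : 0 < min r₃ δ := lt_min hr₃ hδ
    obtain ⟨y', hy'mem, hy'⟩ := exists_point_of_ae (hΦp.and hΦq) (hpos q hqΩ _ hρ₃pos)
    rw [mem_ball] at hy'mem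
    have hdqy' : dist q y' ≤ δ := by
      have h3' : dist y' q < δ := lt_of_lt_of_le hy'mem (min_le_right _ _)
      rw [dist_comm]; linarith
    have e1 : W y' = W p := hy'.1 (by
      calc dist p y' ≤ dist p q + dist q y' := dist_triangle _ _ _
      _ ≤ 2 * δ := by linarith)
    have e2 : W y' = W q := hy'.2 (by linarith)
    rw [hWp] at e1
    rw [hWq] at e2
    exact ht (by rw [← e2, e1])
  have hAne : y₀ ∈ A := ⟨r2, hr2pos, hsub2, hzero⟩
  have hBempty : B = ∅ := by
    by_contra hB
    obtain ⟨yB, hyB⟩ := Set.nonempty_iff_ne_empty.mpr hB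
    refine hconn ⟨A, B, hAopen, hBopen, ⟨y₀, hAne⟩, ⟨yB, hyB⟩, ?_, ?_, hdistAB⟩
    · exact Set.Subset.antisymm (Set.union_subset hAsub hBsub) (fun x hx => hcover x hx)
    · rw [Set.eq_empty_iff_forall_notMem]
      rintro x ⟨hxA, hxB⟩
      have := hdistAB x hxA x hxB
      rw [dist_self] at this
      linarith
  have hallA : ∀ x ∈ Ωnl, x ∈ A := by
    intro x hx
    rcases hcover x hx with h | h
    · exact h
    · rw [hBempty] at h; exact absurd h (Set.notMem_empty x)
  -- conclude that W vanishes a.e.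
  have hae0 : ∀ᵐ x ∂μ, W x = 0 := by
    rw [ae_iff]
    have hrw : μ {a | ¬ W a = 0} = volume ({a | ¬ W a = 0} ∩ Ωnl) := by
      rw [hμ]; exact Measure.restrict_apply' hΩnl_open.measurableSet
    rw [hrw]
    apply measure_null_of_locally_null
    intro x hx
    obtain ⟨ρ, hρ, hsub, haez⟩ := hallA x hx.2
    refine ⟨({a | ¬ W a = 0} ∩ Ωnl) ∩ ball x ρ,
      inter_mem_nhdsWithin _ (ball_mem_nhds _ hρ), ?_⟩
    have hnull : μ (ball x ρ ∩ {a | ¬ W a = 0}) = 0 := by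
      rw [ae_iff] at haez
      apply measure_mono_null _ haez
      rintro y ⟨hy1, hy2⟩
      simp only [Set.mem_setOf_eq] at hy2 ⊢
      intro hcontra
      exact hy2 (hcontra hy1)
    rw [hμ, Measure.restrict_apply' hΩnl_open.measurableSet] at hnull
    apply measure_mono_null _ hnull
    rintro y ⟨⟨hy2, hy3⟩, hy1⟩
    exact ⟨⟨hy1, hy2⟩, hy3⟩
  have hfinal : w =ᵐ[μ] 0 := by
    filter_upwards [hae0] with x hx
    simpa using hx
  exact Lp.eq_zero_iff_ae_eq_zero.mpr hfinal
lemma eqn_aux {N : ℕ} {M : ℝ}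
    {Ωl Ωnl : Set (EuclideanSpace ℝ (Fin N))}
    (hΩl_open : IsOpen Ωl) (hΩl_bdd : Bornology.IsBounded Ωl)
    (hΩnl_open : IsOpen Ωnl) (hΩnl_bdd : Bornology.IsBounded Ωnl)
    (hdisj : Ωl ∩ Ωnl = ∅)
    {J K : EuclideanSpace ℝ (Fin N) → ℝ}
    (hKm : Measurable K) (hJK : K =ᵐ[volume] J)
    (hK0 : ∀ z, 0 ≤ K z) (hKM : ∀ z, K z ≤ M) (hKint : Integrable K)
    (u : Lp ℝ 2 (volume.restrict Ωl)) (v : Lp ℝ 2 (volume.restrict Ωnl))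
    (h : ∀ᵐ x ∂(volume.restrict Ωnl),
      -(0:ℝ) = (∫ y in Ωnlᶜ, J (x - y) * (Set.indicator Ωl u y - v x)) +
          2 * ∫ y in Ωnl, J (x - y) * (v y - v x)) :
    ∀ᵐ x ∂(volume.restrict Ωnl),
      ((∫ y in Ωnlᶜ, K (x - y)) + 2 * ∫ y in Ωnl, K (x - y)) * v x
        = (∫ y in Ωl, K (x - y) * u y) + 2 * ∫ y in Ωnl, K (x - y) * v y := by
  haveI : IsFiniteMeasure (volume.restrict Ωnl) :=
    ⟨by rw [Measure.restrict_apply_univ]; exact hΩnl_bdd.measure_lt_top⟩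
  haveI : IsFiniteMeasure (volume.restrict Ωl) :=
    ⟨by rw [Measure.restrict_apply_univ]; exact hΩl_bdd.measure_lt_top⟩
  have hΩlc : Ωl ⊆ Ωnlᶜ := fun z hz hz' => (Set.eq_empty_iff_forall_notMem.mp hdisj z) ⟨hz, hz'⟩
  have hKx : ∀ x : EuclideanSpace ℝ (Fin N), Integrable (fun y => K (x - y)) volume := by
    intro x
    have h' := (Measure.measurePreserving_sub_left
      (volume : Measure (EuclideanSpace ℝ (Fin N))) x).integrable_comp hKint.aestronglyMeasurable
    exact h'.mpr hKint
  have hKxm : ∀ x : EuclideanSpace ℝ (Fin N), Measurable (fun y => K (x - y)) := fun x =>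
    hKm.comp (measurable_const.sub measurable_id)
  have hKbd : ∀ x : EuclideanSpace ℝ (Fin N),
      ∃ C, ∀ y : EuclideanSpace ℝ (Fin N), ‖K (x - y)‖ ≤ C := fun x =>
    ⟨M, fun y => by rw [Real.norm_eq_abs, abs_of_nonneg (hK0 _)]; exact hKM _⟩
  have hindint : Integrable (Set.indicator Ωl ⇑u) volume := by
    have hio : IntegrableOn (⇑u) Ωl volume := (Lp.memLp u).integrable one_le_two
    exact hio.integrable_indicator hΩl_open.measurableSet
  have hVint : Integrable (⇑v) (volume.restrict Ωnl) := (Lp.memLp v).integrable one_le_two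
  filter_upwards [h] with x hx
  -- kernel change from J to K inside the two integrals
  have hcomp : (fun y => K (x - y)) =ᵐ[volume] fun y => J (x - y) :=
    (Measure.measurePreserving_sub_left
      (volume : Measure (EuclideanSpace ℝ (Fin N))) x).quasiMeasurePreserving.ae_eq_comp hJK
  have e1 : ∫ y in Ωnlᶜ, J (x - y) * (Set.indicator Ωl (⇑u) y - v x)
      = ∫ y in Ωnlᶜ, K (x - y) * (Set.indicator Ωl (⇑u) y - v x) := by
    apply integral_congr_ae
    apply ae_restrict_of_ae
    filter_upwards [hcomp] with y hy
    rw [hy]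
  have e2 : ∫ y in Ωnl, J (x - y) * (v y - v x) = ∫ y in Ωnl, K (x - y) * (v y - v x) := by
    apply integral_congr_ae
    apply ae_restrict_of_ae
    filter_upwards [hcomp] with y hy
    rw [hy]
  rw [neg_zero, e1, e2] at hx
  -- split the complement integral
  have intU : Integrable (fun y => K (x - y) * Set.indicator Ωl (⇑u) y) (volume.restrict Ωnlᶜ) :=
    (hindint.restrict.bdd_mul (hKxm x).aestronglyMeasurable (Eventually.of_forall (hKbd x).choose_spec))
  have intKc : Integrable (fun y => K (x - y)) (volume.restrict Ωnlᶜ) := (hKx x).restrict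
  have intKnl : Integrable (fun y => K (x - y)) (volume.restrict Ωnl) := (hKx x).restrict
  have intKV : Integrable (fun y => K (x - y) * v y) (volume.restrict Ωnl) :=
    hVint.bdd_mul (hKxm x).aestronglyMeasurable (Eventually.of_forall (hKbd x).choose_spec)
  have split1 : ∫ y in Ωnlᶜ, K (x - y) * (Set.indicator Ωl (⇑u) y - v x)
      = (∫ y in Ωnlᶜ, K (x - y) * Set.indicator Ωl (⇑u) y) - (∫ y in Ωnlᶜ, K (x - y)) * v x := by
    have hptw : (fun y => K (x - y) * (Set.indicator Ωl (⇑u) y - v x))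
        = fun y => K (x - y) * Set.indicator Ωl (⇑u) y - K (x - y) * v x :=
      funext fun y => by ring
    rw [hptw, integral_sub intU (intKc.mul_const (v x)), integral_mul_const]
  have split2 : ∫ y in Ωnl, K (x - y) * (v y - v x)
      = (∫ y in Ωnl, K (x - y) * v y) - (∫ y in Ωnl, K (x - y)) * v x := by
    have hptw : (fun y => K (x - y) * (v y - v x))
        = fun y => K (x - y) * v y - K (x - y) * v x :=
      funext fun y => by ring
    rw [hptw, integral_sub intKV (intKnl.mul_const (v x)), integral_mul_const]
  have indid : ∫ y in Ωnlᶜ, K (x - y) * Set.indicator Ωl (⇑u) y = ∫ y in Ωl, K (x - y) * u y := by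
    have hptw : (fun y => K (x - y) * Set.indicator Ωl (⇑u) y)
        = Set.indicator Ωl (fun y => K (x - y) * u y) := by
      funext y
      by_cases hy : y ∈ Ωl
      · rw [Set.indicator_of_mem hy, Set.indicator_of_mem hy]
      · rw [Set.indicator_of_notMem hy, Set.indicator_of_notMem hy, mul_zero]
    rw [hptw, integral_indicator hΩl_open.measurableSet, Measure.restrict_restrict
      hΩl_open.measurableSet, Set.inter_eq_self_of_subset_left hΩlc]
  rw [split1, split2, indid] at hx
  linarith
lemma kernel_integral_bound {N : ℕ} {M : ℝ} {S : Set (EuclideanSpace ℝ (Fin N))}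
    (hSb : Bornology.IsBounded S)
    {K : EuclideanSpace ℝ (Fin N) → ℝ} (hKm : Measurable K) (hK0 : ∀ z, 0 ≤ K z)
    (hKM : ∀ z, K z ≤ M) :
    ∃ CS : ℝ, ∀ (x : EuclideanSpace ℝ (Fin N)) (f g : Lp ℝ 2 (volume.restrict S)),
      |(∫ y in S, K (x - y) * f y) - ∫ y in S, K (x - y) * g y| ≤ CS * ‖f - g‖ := by
  haveI : IsFiniteMeasure (volume.restrict S) :=
    ⟨by rw [Measure.restrict_apply_univ]; exact hSb.measure_lt_top⟩
  refine ⟨((volume.restrict S Set.univ) ^ (2:ℝ≥0∞).toReal⁻¹ * ENNReal.ofReal M).toReal,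
    fun x f g => ?_⟩
  have hkmem : MemLp (fun y => K (x - y)) 2 (volume.restrict S) :=
    MemLp.of_bound (hKm.comp (measurable_const.sub measurable_id)).aestronglyMeasurable M
      (Filter.Eventually.of_forall fun y => by
        rw [Real.norm_eq_abs, abs_of_nonneg (hK0 _)]; exact hKM _)
  set kx := hkmem.toLp _ with hkxdef
  have hkx : ⇑kx =ᵐ[volume.restrict S] fun y => K (x - y) := hkmem.coeFn_toLp
  have hinner : ∀ ff : Lp ℝ 2 (volume.restrict S),
      ∫ y in S, K (x - y) * ff y = inner (𝕜 := ℝ) kx ff := by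
    intro ff
    rw [L2.inner_def]
    apply integral_congr_ae
    filter_upwards [hkx] with y hy
    rw [RCLike.inner_apply, hy]
    simp [starRingEnd_apply, mul_comm]
  rw [hinner f, hinner g, ← inner_sub_right]
  have hb : |inner (𝕜 := ℝ) kx (f - g)| ≤ ‖kx‖ * ‖f - g‖ := abs_real_inner_le_norm _ _
  refine hb.trans (mul_le_mul_of_nonneg_right ?_ (norm_nonneg _))
  have hnorm : ‖kx‖ = (eLpNorm (fun y => K (x - y)) 2 (volume.restrict S)).toReal := by
    rw [hkxdef, Lp.norm_toLp]
  rw [hnorm]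
  apply ENNReal.toReal_mono
  · exact ENNReal.mul_ne_top
      (ENNReal.rpow_ne_top_of_nonneg (by positivity) (measure_ne_top _ _))
      ENNReal.ofReal_ne_top
  · exact eLpNorm_le_of_ae_bound (Filter.Eventually.of_forall fun y => by
      rw [Real.norm_eq_abs, abs_of_nonneg (hK0 _)]; exact hKM _)
set_option maxHeartbeats 2000000 in
/-- The solution operator `L_{nℓ} : L²(Ω_ℓ) → L²(Ω_{nℓ})`, sending `u` to the unique
solution of the nonlocal problem with data `(0, u)`, is linear and bounded. -/
theorem nonlocal_solution_operator_bounded_linear {N : ℕ} (δ : ℝ) (hδ : 0 < δ)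
    (Ωl Ωnl : Set (EuclideanSpace ℝ (Fin N)))
    (hΩl_open : IsOpen Ωl) (hΩl_bdd : Bornology.IsBounded Ωl)
    (hΩnl_open : IsOpen Ωnl) (hΩnl_bdd : Bornology.IsBounded Ωnl)
    (hdisj : Ωl ∩ Ωnl = ∅)
    (hΩnl_conn : DeltaConnected δ Ωnl)
    (hP1 : ∃ x ∈ Ωl, ∃ y ∈ Ωnl, dist x y < δ)
    (J : EuclideanSpace ℝ (Fin N) → ℝ)
    (hJ_nonneg : ∀ z, 0 ≤ J z)
    (hJ_symm : ∀ z, J (-z) = J z)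
    (hJ_bdd : ∃ M : ℝ, ∀ z, J z ≤ M)
    (hJ_int : Integrable J)
    (hJ1 : ∃ c > (0 : ℝ), ∀ z, ‖z‖ ≤ 2 * δ → c ≤ J z)
    (hJ2 : ∃ K : Lp ℝ 2 (volume.restrict Ωnl) →L[ℝ] Lp ℝ 2 (volume.restrict Ωnl),
      IsCompactOperator K ∧ ∀ w : Lp ℝ 2 (volume.restrict Ωnl),
        ∀ᵐ x ∂(volume.restrict Ωnl), K w x = ∫ y in Ωnl, J (x - y) * w y)
    (Lnl : Lp ℝ 2 (volume.restrict Ωl) → Lp ℝ 2 (volume.restrict Ωnl))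
    (hLnl : ∀ u : Lp ℝ 2 (volume.restrict Ωl),
      ∀ᵐ x ∂(volume.restrict Ωnl),
        -(0 : ℝ) = (∫ y in Ωnlᶜ, J (x - y) * (Set.indicator Ωl u y - Lnl u x)) +
          2 * ∫ y in Ωnl, J (x - y) * (Lnl u y - Lnl u x)) :
    (∀ u₁ u₂ : Lp ℝ 2 (volume.restrict Ωl), Lnl (u₁ + u₂) = Lnl u₁ + Lnl u₂) ∧
    (∀ (c : ℝ) (u : Lp ℝ 2 (volume.restrict Ωl)), Lnl (c • u) = c • Lnl u) ∧
    ∃ C > (0 : ℝ), ∀ u : Lp ℝ 2 (volume.restrict Ωl), ‖Lnl u‖ ≤ C * ‖u‖ := by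
  classical
  obtain ⟨c, hc, hJ1'⟩ := hJ1
  obtain ⟨M, hM⟩ := hJ_bdd
  obtain ⟨K, hKm, hKae, hK0, hKM, hKsymm, hK1, hKint⟩ :=
    exists_goodJ hδ hc hJ_nonneg hJ_symm hM hJ_int hJ1'
  haveI : IsFiniteMeasure (volume.restrict Ωnl) :=
    ⟨by rw [Measure.restrict_apply_univ]; exact hΩnl_bdd.measure_lt_top⟩
  haveI : IsFiniteMeasure (volume.restrict Ωl) :=
    ⟨by rw [Measure.restrict_apply_univ]; exact hΩl_bdd.measure_lt_top⟩
  -- the reformulated equation satisfied by `Lnl u`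
  have heqn : ∀ u : Lp ℝ 2 (volume.restrict Ωl), ∀ᵐ x ∂(volume.restrict Ωnl),
      ((∫ y in Ωnlᶜ, K (x - y)) + 2 * ∫ y in Ωnl, K (x - y)) * (Lnl u) x
        = (∫ y in Ωl, K (x - y) * u y) + 2 * ∫ y in Ωnl, K (x - y) * (Lnl u) y :=
    fun u => eqn_aux hΩl_open hΩl_bdd hΩnl_open hΩnl_bdd hdisj hKm hKae hK0 hKM hKint
      u (Lnl u) (hLnl u)
  -- integrability of the kernel against L² functions
  have hKbd : ∀ x : EuclideanSpace ℝ (Fin N),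
      ∃ C, ∀ y : EuclideanSpace ℝ (Fin N), ‖K (x - y)‖ ≤ C := fun x =>
    ⟨M, fun y => by rw [Real.norm_eq_abs, abs_of_nonneg (hK0 _)]; exact hKM _⟩
  have hintKnl : ∀ (x : EuclideanSpace ℝ (Fin N)) (vv : Lp ℝ 2 (volume.restrict Ωnl)),
      Integrable (fun y => K (x - y) * vv y) (volume.restrict Ωnl) := fun x vv =>
    ((Lp.memLp vv).integrable one_le_two).bdd_mul
      ((hKm.comp (measurable_const.sub measurable_id)).aestronglyMeasurable) (Eventually.of_forall (hKbd x).choose_spec)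
  have hintKl : ∀ (x : EuclideanSpace ℝ (Fin N)) (uu : Lp ℝ 2 (volume.restrict Ωl)),
      Integrable (fun y => K (x - y) * uu y) (volume.restrict Ωl) := fun x uu =>
    ((Lp.memLp uu).integrable one_le_two).bdd_mul
      ((hKm.comp (measurable_const.sub measurable_id)).aestronglyMeasurable) (Eventually.of_forall (hKbd x).choose_spec)
  -- uniqueness of solutions with the same data
  have huniq : ∀ (v v' : Lp ℝ 2 (volume.restrict Ωnl)) (g : EuclideanSpace ℝ (Fin N) → ℝ),
      (∀ᵐ x ∂(volume.restrict Ωnl),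
        ((∫ y in Ωnlᶜ, K (x - y)) + 2 * ∫ y in Ωnl, K (x - y)) * v x
          = g x + 2 * ∫ y in Ωnl, K (x - y) * v y) →
      (∀ᵐ x ∂(volume.restrict Ωnl),
        ((∫ y in Ωnlᶜ, K (x - y)) + 2 * ∫ y in Ωnl, K (x - y)) * v' x
          = g x + 2 * ∫ y in Ωnl, K (x - y) * v' y) → v = v' := by
    intro v v' g hv hv'
    have hTsub : ∀ x, ∫ y in Ωnl, K (x - y) * (v - v') y
        = (∫ y in Ωnl, K (x - y) * v y) - ∫ y in Ωnl, K (x - y) * v' y := by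
      intro x
      rw [← integral_sub (hintKnl x v) (hintKnl x v')]
      apply integral_congr_ae
      filter_upwards [Lp.coeFn_sub v v'] with y hy
      rw [hy, Pi.sub_apply]
      ring
    have h0 : v - v' = 0 := by
      apply uniq_aux hδ hc hΩl_open hΩnl_open hΩnl_bdd hdisj hΩnl_conn hP1 hKm hK0 hKM
        hKsymm hK1 hKint (v - v')
      filter_upwards [hv, hv', Lp.coeFn_sub v v'] with x h1 h2 h3
      rw [hTsub x, h3, Pi.sub_apply, mul_sub]
      linarith
    exact sub_eq_zero.mp h0
  -- additivity
  have hadd : ∀ u₁ u₂ : Lp ℝ 2 (volume.restrict Ωl), Lnl (u₁ + u₂) = Lnl u₁ + Lnl u₂ := by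
    intro u₁ u₂
    refine huniq _ _ (fun x => ∫ y in Ωl, K (x - y) * (u₁ + u₂ : Lp ℝ 2 (volume.restrict Ωl)) y)
      (heqn (u₁ + u₂)) ?_
    have hG : ∀ x, ∫ y in Ωl, K (x - y) * (u₁ + u₂ : Lp ℝ 2 (volume.restrict Ωl)) y
        = (∫ y in Ωl, K (x - y) * u₁ y) + ∫ y in Ωl, K (x - y) * u₂ y := by
      intro x
      rw [← integral_add (hintKl x u₁) (hintKl x u₂)]
      apply integral_congr_ae
      filter_upwards [Lp.coeFn_add u₁ u₂] with y hy
      rw [hy, Pi.add_apply]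
      ring
    have hT : ∀ x, ∫ y in Ωnl, K (x - y) * (Lnl u₁ + Lnl u₂ : Lp ℝ 2 (volume.restrict Ωnl)) y
        = (∫ y in Ωnl, K (x - y) * (Lnl u₁) y) + ∫ y in Ωnl, K (x - y) * (Lnl u₂) y := by
      intro x
      rw [← integral_add (hintKnl x (Lnl u₁)) (hintKnl x (Lnl u₂))]
      apply integral_congr_ae
      filter_upwards [Lp.coeFn_add (Lnl u₁) (Lnl u₂)] with y hy
      rw [hy, Pi.add_apply]
      ring
    filter_upwards [heqn u₁, heqn u₂, Lp.coeFn_add (Lnl u₁) (Lnl u₂)] with x h1 h2 h3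
    rw [hT x, hG x, h3, Pi.add_apply, mul_add]
    linarith
  -- homogeneity
  have hsmul : ∀ (a : ℝ) (u : Lp ℝ 2 (volume.restrict Ωl)), Lnl (a • u) = a • Lnl u := by
    intro a u
    refine huniq _ _ (fun x => ∫ y in Ωl, K (x - y) * (a • u : Lp ℝ 2 (volume.restrict Ωl)) y)
      (heqn (a • u)) ?_
    have hG : ∀ x, ∫ y in Ωl, K (x - y) * (a • u : Lp ℝ 2 (volume.restrict Ωl)) y
        = a * ∫ y in Ωl, K (x - y) * u y := by
      intro x
      rw [← integral_const_mul]
      apply integral_congr_ae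
      filter_upwards [Lp.coeFn_smul a u] with y hy
      rw [hy, Pi.smul_apply, smul_eq_mul]
      ring
    have hT : ∀ x, ∫ y in Ωnl, K (x - y) * (a • Lnl u : Lp ℝ 2 (volume.restrict Ωnl)) y
        = a * ∫ y in Ωnl, K (x - y) * (Lnl u) y := by
      intro x
      rw [← integral_const_mul]
      apply integral_congr_ae
      filter_upwards [Lp.coeFn_smul a (Lnl u)] with y hy
      rw [hy, Pi.smul_apply, smul_eq_mul]
      ring
    filter_upwards [heqn u, Lp.coeFn_smul a (Lnl u)] with x h1 h2
    rw [hT x, hG x, h2, Pi.smul_apply, smul_eq_mul]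
    linear_combination a * h1
  -- boundedness via the closed graph theorem
  obtain ⟨C1, hC1⟩ := kernel_integral_bound hΩl_bdd hKm hK0 hKM
  obtain ⟨C2, hC2⟩ := kernel_integral_bound hΩnl_bdd hKm hK0 hKM
  let gLin : Lp ℝ 2 (volume.restrict Ωl) →ₗ[ℝ] Lp ℝ 2 (volume.restrict Ωnl) :=
    { toFun := Lnl, map_add' := hadd, map_smul' := fun a u => by simpa using hsmul a u }
  have hcont : Continuous gLin := by
    apply gLin.continuous_of_seq_closed_graph
    intro s x y hsx hsy
    have hVt : Tendsto (fun n => Lnl (s n)) atTop (𝓝 y) := hsy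
    have hGconv : ∀ x' : EuclideanSpace ℝ (Fin N),
        Tendsto (fun n => ∫ y' in Ωl, K (x' - y') * (s n) y') atTop
          (𝓝 (∫ y' in Ωl, K (x' - y') * x y')) := by
      intro x'
      rw [tendsto_iff_dist_tendsto_zero]
      have hd : Tendsto (fun n => C1 * ‖s n - x‖) atTop (𝓝 0) := by
        have h0 : Tendsto (fun n => C1 * dist (s n) x) atTop (𝓝 (C1 * 0)) :=
          (tendsto_iff_dist_tendsto_zero.mp hsx).const_mul C1
        rw [mul_zero] at h0
        refine h0.congr fun n => by rw [dist_eq_norm]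
      refine squeeze_zero (fun n => dist_nonneg) (fun n => ?_) hd
      rw [Real.dist_eq]
      exact hC1 x' (s n) x
    have hTconv : ∀ x' : EuclideanSpace ℝ (Fin N),
        Tendsto (fun n => ∫ y' in Ωnl, K (x' - y') * (Lnl (s n)) y') atTop
          (𝓝 (∫ y' in Ωnl, K (x' - y') * y y')) := by
      intro x'
      rw [tendsto_iff_dist_tendsto_zero]
      have hd : Tendsto (fun n => C2 * ‖Lnl (s n) - y‖) atTop (𝓝 0) := by
        have h0 : Tendsto (fun n => C2 * dist (Lnl (s n)) y) atTop (𝓝 (C2 * 0)) :=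
          (tendsto_iff_dist_tendsto_zero.mp hVt).const_mul C2
        rw [mul_zero] at h0
        refine h0.congr fun n => by rw [dist_eq_norm]
      refine squeeze_zero (fun n => dist_nonneg) (fun n => ?_) hd
      rw [Real.dist_eq]
      exact hC2 x' (Lnl (s n)) y
    obtain ⟨ns, hns, hconv⟩ := (tendstoInMeasure_of_tendsto_Lp hVt).exists_seq_tendsto_ae
    have hall : ∀ᵐ x' ∂(volume.restrict Ωnl), ∀ n : ℕ,
        ((∫ y' in Ωnlᶜ, K (x' - y')) + 2 * ∫ y' in Ωnl, K (x' - y')) * (Lnl (s n)) x'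
          = (∫ y' in Ωl, K (x' - y') * (s n) y')
            + 2 * ∫ y' in Ωnl, K (x' - y') * (Lnl (s n)) y' :=
      ae_all_iff.mpr fun n => heqn (s n)
    have key : ∀ᵐ x' ∂(volume.restrict Ωnl),
        ((∫ y' in Ωnlᶜ, K (x' - y')) + 2 * ∫ y' in Ωnl, K (x' - y')) * y x'
          = (∫ y' in Ωl, K (x' - y') * x y') + 2 * ∫ y' in Ωnl, K (x' - y') * y y' := by
      filter_upwards [hall, hconv] with x' h1 h2
      have lhsT : Tendsto (fun i =>
          ((∫ y' in Ωnlᶜ, K (x' - y')) + 2 * ∫ y' in Ωnl, K (x' - y')) * (Lnl (s (ns i))) x')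
          atTop (𝓝 (((∫ y' in Ωnlᶜ, K (x' - y')) + 2 * ∫ y' in Ωnl, K (x' - y')) * y x')) :=
        h2.const_mul _
      have rhsT : Tendsto (fun i => (∫ y' in Ωl, K (x' - y') * (s (ns i)) y')
          + 2 * ∫ y' in Ωnl, K (x' - y') * (Lnl (s (ns i))) y') atTop
          (𝓝 ((∫ y' in Ωl, K (x' - y') * x y') + 2 * ∫ y' in Ωnl, K (x' - y') * y y')) := by
        refine Tendsto.add ?_ ?_
        · exact (hGconv x').comp hns.tendsto_atTop
        · exact (((hTconv x').comp hns.tendsto_atTop).const_mul 2)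
      have heq : (fun i =>
          ((∫ y' in Ωnlᶜ, K (x' - y')) + 2 * ∫ y' in Ωnl, K (x' - y')) * (Lnl (s (ns i))) x')
          = fun i => (∫ y' in Ωl, K (x' - y') * (s (ns i)) y')
            + 2 * ∫ y' in Ωnl, K (x' - y') * (Lnl (s (ns i))) y' :=
        funext fun i => h1 (ns i)
      rw [heq] at lhsT
      exact tendsto_nhds_unique lhsT rhsT
    exact huniq y (Lnl x) _ key (heqn x)
  let G : Lp ℝ 2 (volume.restrict Ωl) →L[ℝ] Lp ℝ 2 (volume.restrict Ωnl) :=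
    { toLinearMap := gLin, cont := hcont }
  obtain ⟨C, hCpos, hCb⟩ := G.bound
  exact ⟨hadd, hsmul, C, hCpos, fun u => hCb u⟩
end

section
/- Let Ω_ℓ and Ω_{nℓ} be disjoint open bounded subsets of ℝ^N with Ω_{nℓ} δ-connected and dist(Ω_ℓ, Ω_{nℓ}) < δ (condition (P1)), and let J satisfy (J1) and (J2). Fix u ∈ L²(Ω_ℓ) and f ∈ L²(Ω_{nℓ}). If v̲ ∈ L²(Ω_{nℓ}) is a subsolution of the nonlocal problem with data (f, u) and v ∈ L²(Ω_{nℓ}) is a solution of the nonlocal problem with the same data (f, u), then v̲(x) ≤ v(x) for almost every x ∈ Ω_{nℓ}. -/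
open MeasureTheory Metric

/- ## Auxiliary lemmas -/

lemma integrable_mul_of_memL2 {α : Type*} [MeasurableSpace α] {μ : Measure α} {f g : α → ℝ}
    (hf : MemLp f 2 μ) (hg : MemLp g 2 μ) : Integrable (fun x => f x * g x) μ := by
  have h := L2.integrable_inner (𝕜 := ℝ) (hf.toLp f) (hg.toLp g)
  have h1 := MemLp.coeFn_toLp hf
  have h2 := MemLp.coeFn_toLp hg
  refine h.congr ?_
  filter_upwards [h1, h2] with x e1 e2
  simp [RCLike.inner_apply, e1, e2, mul_comm]

lemma nlcp_sq_le : ∀ a b : ℝ, (max b 0 - max a 0)^2 ≤ (b - a) * (max b 0 - max a 0) := by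
  intro a b
  rcases le_total a 0 with ha | ha <;> rcases le_total b 0 with hb | hb
  · rw [max_eq_right ha, max_eq_right hb]; ring_nf; simp
  · rw [max_eq_right ha, max_eq_left hb]; nlinarith
  · rw [max_eq_left ha, max_eq_right hb]; nlinarith
  · rw [max_eq_left ha, max_eq_left hb]; nlinarith [sq_nonneg (b-a)]

lemma nlcp_mul_self : ∀ a : ℝ, max a 0 * a = (max a 0)^2 := by
  intro a
  rcases le_total a 0 with h | h
  · rw [max_eq_right h]; ring
  · rw [max_eq_left h]; ring

lemma nlcp_abs_mul_le (a b : ℝ) : |a| * |b| ≤ (a^2 + b^2)/2 := by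
  nlinarith [sq_abs a, sq_abs b, sq_nonneg (|a| - |b|)]

section
variable {N : ℕ}

noncomputable def nlcpEquiv (x : EuclideanSpace ℝ (Fin N)) :
    EuclideanSpace ℝ (Fin N) ≃ᵐ EuclideanSpace ℝ (Fin N) :=
  (MeasurableEquiv.neg _).trans (MeasurableEquiv.addLeft x)

lemma nlcpEquiv_apply (x y : EuclideanSpace ℝ (Fin N)) : nlcpEquiv x y = x - y := by
  simp [nlcpEquiv, MeasurableEquiv.addLeft, sub_eq_add_neg]

lemma nlcp_integral_comp (K : EuclideanSpace ℝ (Fin N) → ℝ) (x : EuclideanSpace ℝ (Fin N)) :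
    ∫ y, K (x - y) = ∫ z, K z := by
  have mp := Measure.measurePreserving_sub_left (volume : Measure (EuclideanSpace ℝ (Fin N))) x
  have he : (fun y => x - y) = (nlcpEquiv x : EuclideanSpace ℝ (Fin N) → EuclideanSpace ℝ (Fin N)) := by
    ext y; rw [nlcpEquiv_apply]
  calc ∫ y, K (x - y) = ∫ y, K (nlcpEquiv x y) := by simp_rw [nlcpEquiv_apply]
    _ = ∫ z, K z := MeasurePreserving.integral_comp (by rwa [he] at mp)
        (nlcpEquiv x).measurableEmbedding _

lemma nlcp_integrable_comp {K : EuclideanSpace ℝ (Fin N) → ℝ} (hK : Integrable K)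
    (x : EuclideanSpace ℝ (Fin N)) : Integrable (fun y => K (x - y)) := by
  have mp := Measure.measurePreserving_sub_left (volume : Measure (EuclideanSpace ℝ (Fin N))) x
  have he : (fun y => x - y) = (nlcpEquiv x : EuclideanSpace ℝ (Fin N) → EuclideanSpace ℝ (Fin N)) := by
    ext y; rw [nlcpEquiv_apply]
  have := (MeasurePreserving.integrable_comp_emb (by rwa [he] at mp)
    (nlcpEquiv x).measurableEmbedding (g := K)).mpr hK
  refine this.congr ?_
  filter_upwards with y
  rw [Function.comp_apply, nlcpEquiv_apply]

lemma nlcp_propagation {δ : ℝ} (hδ : 0 < δ) {Ωnl : Set (EuclideanSpace ℝ (Fin N))}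
    (hopen : IsOpen Ωnl) (hconn : DeltaConnected δ Ωnl)
    (p : EuclideanSpace ℝ (Fin N) → ℝ)
    (hpair : ∀ᵐ x ∂(volume.restrict Ωnl), ∀ᵐ y ∂(volume.restrict Ωnl),
        dist x y ≤ 2*δ → p y = p x)
    (hseed : ∃ y₀ ∈ Ωnl, ∃ r > (0:ℝ), ∀ᵐ y ∂(volume.restrict Ωnl), y ∈ ball y₀ r → p y = 0) :
    ∀ᵐ y ∂(volume.restrict Ωnl), p y = 0 := by
  set μ := volume.restrict Ωnl with hμ
  set Q : EuclideanSpace ℝ (Fin N) → Prop := fun x => ∀ᵐ y ∂μ, y ∈ ball x δ → p y = 0 with hQ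
  have keyLemma : ∀ x₀, μ {y | y ∈ ball x₀ δ ∧ p y = 0} ≠ 0 → Q x₀ := by
    intro x₀ hpos
    set S := {y | y ∈ ball x₀ δ ∧ p y = 0} with hS
    have hbad : μ {x | ¬ ∀ᵐ y ∂μ, dist x y ≤ 2*δ → p y = p x} = 0 := ae_iff.mp hpair
    have hex : ∃ x, x ∈ S ∧ (∀ᵐ y ∂μ, dist x y ≤ 2*δ → p y = p x) := by
      by_contra hcon
      push_neg at hcon
      have : S ⊆ {x | ¬ ∀ᵐ y ∂μ, dist x y ≤ 2*δ → p y = p x} := fun x hx =>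
        Filter.not_eventually.mpr ((hcon x hx).mono fun y hy => _root_.not_imp.mpr hy)
      exact hpos (measure_mono_null this hbad)
    obtain ⟨x, ⟨hxball, hxzero⟩, hxae⟩ := hex
    filter_upwards [hxae] with y hy hyball
    have : dist x y ≤ 2*δ := by
      have h1 : dist x x₀ < δ := mem_ball.mp hxball
      have h2 : dist y x₀ < δ := mem_ball.mp hyball
      calc dist x y ≤ dist x x₀ + dist x₀ y := dist_triangle _ _ _
        _ = dist x x₀ + dist y x₀ := by rw [dist_comm x₀ y]
        _ ≤ 2*δ := by linarith
    rw [hy this, hxzero]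
  have hZ : ∀ x' ∈ Ωnl, ∀ t > (0:ℝ), (∀ᵐ y ∂μ, y ∈ ball x' t → p y = 0) → Q x' := by
    intro x' hx' t ht hzero
    obtain ⟨s₀, hs₀pos, hs₀⟩ := Metric.isOpen_iff.mp hopen x' hx'
    set r := min (min t s₀) δ with hr
    have hrpos : 0 < r := lt_min (lt_min ht hs₀pos) hδ
    have hsub1 : ball x' r ⊆ ball x' t :=
      ball_subset_ball (le_trans (min_le_left _ _) (min_le_left _ _))
    have hsub2 : ball x' r ⊆ Ωnl := fun y hy =>
      hs₀ (ball_subset_ball (le_trans (min_le_left _ _) (min_le_right _ _)) hy)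
    have hsub3 : ball x' r ⊆ ball x' δ := ball_subset_ball (min_le_right _ _)
    apply keyLemma
    have hballμ : μ (ball x' r) = volume (ball x' r) := by
      rw [hμ, Measure.restrict_apply measurableSet_ball, Set.inter_eq_left.mpr hsub2]
    have hposr : 0 < μ (ball x' r) := by
      rw [hballμ]; exact measure_ball_pos _ _ hrpos
    have hnull : μ (ball x' r \ {y | p y = 0}) = 0 := by
      apply measure_mono_null _ (ae_iff.mp hzero)
      intro y hy
      simp only [Set.mem_diff, Set.mem_setOf_eq] at hy ⊢
      push_neg
      exact ⟨hsub1 hy.1, hy.2⟩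
    have hle : μ (ball x' r) ≤ μ {y | y ∈ ball x' δ ∧ p y = 0} + μ (ball x' r \ {y | p y = 0}) := by
      refine le_trans (measure_le_inter_add_diff μ (ball x' r) {y | p y = 0}) ?_
      gcongr
      intro y hy
      exact ⟨hsub3 hy.1, hy.2⟩
    rw [hnull, add_zero] at hle
    exact fun h => (hposr.trans_le hle).ne' h
  have hQmono : ∀ x x', x' ∈ Ωnl → dist x x' < δ → Q x → Q x' := by
    intro x x' hx' hdist hQx
    refine hZ x' hx' (δ - dist x x') (by linarith) ?_
    filter_upwards [hQx] with y hy hyball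
    apply hy
    rw [mem_ball] at hyball ⊢
    calc dist y x ≤ dist y x' + dist x' x := dist_triangle _ _ _
      _ < (δ - dist x x') + dist x x' := by rw [dist_comm x' x]; linarith
      _ = δ := by ring
  obtain ⟨y₀, hy₀, r, hrpos, hseed0⟩ := hseed
  have hQy₀ : Q y₀ := hZ y₀ hy₀ r hrpos hseed0
  have hall : ∀ x ∈ Ωnl, Q x := by
    by_contra hcon
    push_neg at hcon
    obtain ⟨b, hbmem, hbQ⟩ := hcon
    apply hconn
    refine ⟨{x | x ∈ Ωnl ∧ Q x}, {x | x ∈ Ωnl ∧ ¬ Q x}, ?_, ?_,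
      ⟨y₀, hy₀, hQy₀⟩, ⟨b, hbmem, hbQ⟩, ?_, ?_, ?_⟩
    · rw [Metric.isOpen_iff]
      rintro x ⟨hxΩ, hxQ⟩
      obtain ⟨s₀, hs₀pos, hs₀⟩ := Metric.isOpen_iff.mp hopen x hxΩ
      refine ⟨min s₀ δ, lt_min hs₀pos hδ, fun y hy => ?_⟩
      have hyΩ : y ∈ Ωnl := hs₀ (ball_subset_ball (min_le_left _ _) hy)
      have hyd : dist x y < δ := by
        have := mem_ball.mp (ball_subset_ball (min_le_right _ _) hy)
        rwa [dist_comm]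
      exact ⟨hyΩ, hQmono x y hyΩ hyd hxQ⟩
    · rw [Metric.isOpen_iff]
      rintro x ⟨hxΩ, hxQ⟩
      obtain ⟨s₀, hs₀pos, hs₀⟩ := Metric.isOpen_iff.mp hopen x hxΩ
      refine ⟨min s₀ δ, lt_min hs₀pos hδ, fun y hy => ?_⟩
      have hyΩ : y ∈ Ωnl := hs₀ (ball_subset_ball (min_le_left _ _) hy)
      refine ⟨hyΩ, fun hyQ => hxQ ?_⟩
      have hyd : dist y x < δ := mem_ball.mp (ball_subset_ball (min_le_right _ _) hy)
      exact hQmono y x hxΩ hyd hyQ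
    · ext x
      constructor
      · rintro (⟨h, _⟩ | ⟨h, _⟩) <;> exact h
      · intro hx
        by_cases hQx : Q x
        · exact Or.inl ⟨hx, hQx⟩
        · exact Or.inr ⟨hx, hQx⟩
    · ext x
      simp only [Set.mem_inter_iff, Set.mem_setOf_eq, Set.mem_empty_iff_false, iff_false]
      rintro ⟨⟨_, h1⟩, ⟨_, h2⟩⟩
      exact h2 h1
    · rintro x ⟨hxΩ, hxQ⟩ y ⟨hyΩ, hyQ⟩
      by_contra hlt
      push_neg at hlt
      exact hyQ (hQmono x y hyΩ hlt hxQ)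
  obtain ⟨T, hTcount, hTeq⟩ := TopologicalSpace.isOpen_iUnion_countable
    (fun i : Ωnl => ball (i : EuclideanSpace ℝ (Fin N)) δ) (fun i => isOpen_ball)
  have hcover : Ωnl ⊆ ⋃ i ∈ T, ball (i : EuclideanSpace ℝ (Fin N)) δ := by
    rw [hTeq]
    intro x hx
    exact Set.mem_iUnion.mpr ⟨⟨x, hx⟩, mem_ball_self hδ⟩
  have hae : ∀ᵐ y ∂μ, ∀ i ∈ T, y ∈ ball (i : EuclideanSpace ℝ (Fin N)) δ → p y = 0 := by
    rw [ae_ball_iff hTcount]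
    intro i _
    exact hall i i.2
  have hmem : ∀ᵐ y ∂μ, y ∈ Ωnl := ae_restrict_mem hopen.measurableSet
  filter_upwards [hae, hmem] with y hy hyΩ
  obtain ⟨i, hiT, hi⟩ := Set.mem_iUnion₂.mp (hcover hyΩ)
  exact hy i hiT hi

end

set_option maxHeartbeats 2000000 in
/-- Comparison principle for the nonlocal problem: a subsolution lies a.e. below a solution
with the same data `(f, u)`. -/
theorem nonlocal_comparison_principle {N : ℕ} (δ : ℝ) (hδ : 0 < δ)
    (Ωl Ωnl : Set (EuclideanSpace ℝ (Fin N)))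
    (hΩl_open : IsOpen Ωl) (hΩl_bdd : Bornology.IsBounded Ωl)
    (hΩnl_open : IsOpen Ωnl) (hΩnl_bdd : Bornology.IsBounded Ωnl)
    (hdisj : Ωl ∩ Ωnl = ∅)
    (hΩnl_conn : DeltaConnected δ Ωnl)
    (hP1 : ∃ x ∈ Ωl, ∃ y ∈ Ωnl, dist x y < δ)
    (J : EuclideanSpace ℝ (Fin N) → ℝ)
    (hJ_nonneg : ∀ z, 0 ≤ J z)
    (hJ_symm : ∀ z, J (-z) = J z)
    (hJ_bdd : ∃ M : ℝ, ∀ z, J z ≤ M)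
    (hJ_int : Integrable J)
    (hJ1 : ∃ c > (0 : ℝ), ∀ z, ‖z‖ ≤ 2 * δ → c ≤ J z)
    (hJ2 : ∃ K : Lp ℝ 2 (volume.restrict Ωnl) →L[ℝ] Lp ℝ 2 (volume.restrict Ωnl),
      IsCompactOperator K ∧ ∀ w : Lp ℝ 2 (volume.restrict Ωnl),
        ∀ᵐ x ∂(volume.restrict Ωnl), K w x = ∫ y in Ωnl, J (x - y) * w y)
    (f : EuclideanSpace ℝ (Fin N) → ℝ) (hf : MemLp f 2 (volume.restrict Ωnl))
    (u : EuclideanSpace ℝ (Fin N) → ℝ) (hu : MemLp u 2 (volume.restrict Ωl))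
    (vsub : EuclideanSpace ℝ (Fin N) → ℝ) (hvsub : MemLp vsub 2 (volume.restrict Ωnl))
    (v : EuclideanSpace ℝ (Fin N) → ℝ) (hv : MemLp v 2 (volume.restrict Ωnl))
    (hsub : ∀ᵐ x ∂(volume.restrict Ωnl),
      -f x ≤ (∫ y in Ωnlᶜ, J (x - y) * (Set.indicator Ωl u y - vsub x)) +
        2 * ∫ y in Ωnl, J (x - y) * (vsub y - vsub x))
    (hsol : ∀ᵐ x ∂(volume.restrict Ωnl),
      -f x = (∫ y in Ωnlᶜ, J (x - y) * (Set.indicator Ωl u y - v x)) +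
        2 * ∫ y in Ωnl, J (x - y) * (v y - v x)) :
    ∀ᵐ x ∂(volume.restrict Ωnl), vsub x ≤ v x := by
  classical
  obtain ⟨M, hM⟩ := hJ_bdd
  obtain ⟨c, hcpos, hc⟩ := hJ1
  set μ := volume.restrict Ωnl with hμdef
  haveI hfinμ : IsFiniteMeasure μ := by
    constructor
    rw [hμdef, Measure.restrict_apply_univ]
    exact hΩnl_bdd.measure_lt_top
  haveI hfinl : IsFiniteMeasure (volume.restrict Ωl) := by
    constructor
    rw [Measure.restrict_apply_univ]
    exact hΩl_bdd.measure_lt_top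
  -- measurable modification of the kernel
  have hJm := hJ_int.1
  set J' := hJm.mk J with hJ'def
  have hJ'meas : StronglyMeasurable J' := hJm.stronglyMeasurable_mk
  set M' := max M 0 with hM'def
  have hM'0 : 0 ≤ M' := le_max_right M 0
  set K : EuclideanSpace ℝ (Fin N) → ℝ :=
    fun z => min (max ((J' z + J' (-z))/2) 0) M' with hKdef
  have hKmeas : Measurable K := by
    apply Measurable.min _ measurable_const
    apply Measurable.max _ measurable_const
    exact (hJ'meas.measurable.add (hJ'meas.measurable.comp measurable_neg)).div_const 2
  have hKsymm : ∀ z, K (-z) = K z := by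
    intro z
    simp only [hKdef, neg_neg]
    rw [add_comm]
  have hK0 : ∀ z, 0 ≤ K z := fun z => le_min (le_max_right _ _) hM'0
  have hKM : ∀ z, K z ≤ M' := fun z => min_le_right _ _
  have hKJ : ∀ᵐ z : EuclideanSpace ℝ (Fin N), K z = J z := by
    have hneg : ∀ᵐ z : EuclideanSpace ℝ (Fin N), J (-z) = J' (-z) :=
      (Measure.measurePreserving_neg
        (volume : Measure (EuclideanSpace ℝ (Fin N)))).quasiMeasurePreserving.ae hJm.ae_eq_mk
    filter_upwards [hJm.ae_eq_mk, hneg] with z h1 h2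
    simp only [hKdef]
    rw [← hJ'def] at h1
    rw [← h1, ← h2, hJ_symm z]
    have h3 : (J z + J z)/2 = J z := by ring
    rw [h3, max_eq_left (hJ_nonneg z), min_eq_left (le_trans (hM z) (le_max_left _ _))]
  have hKint : Integrable K := hJ_int.congr (hKJ.mono fun z h => h.symm)
  have hKx : ∀ x, ∀ᵐ y : EuclideanSpace ℝ (Fin N), K (x - y) = J (x - y) := fun x =>
    (Measure.measurePreserving_sub_left volume x).quasiMeasurePreserving.ae hKJ
  have hKxint : ∀ x, Integrable (fun y => K (x - y)) := fun x => nlcp_integrable_comp hKint x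
  have hKxmeas : ∀ x : EuclideanSpace ℝ (Fin N), Measurable (fun y => K (x - y)) := fun x =>
    hKmeas.comp (measurable_const.sub measurable_id)
  have hKxnorm : ∀ x y : EuclideanSpace ℝ (Fin N), ‖K (x - y)‖ ≤ M' := by
    intro x y
    rw [Real.norm_eq_abs, abs_of_nonneg (hK0 _)]
    exact hKM _
  -- measurable representatives
  set vs := hvsub.1.mk vsub with hvsdef
  set vv := hv.1.mk v with hvvdef
  have hvs : vsub =ᵐ[μ] vs := hvsub.1.ae_eq_mk
  have hvv : v =ᵐ[μ] vv := hv.1.ae_eq_mk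
  have hvs2 : MemLp vs 2 μ := hvsub.ae_eq hvs
  have hvv2 : MemLp vv 2 μ := hv.ae_eq hvv
  set w : EuclideanSpace ℝ (Fin N) → ℝ := fun x => vs x - vv x with hwdef
  set p : EuclideanSpace ℝ (Fin N) → ℝ := fun x => max (w x) 0 with hpdef
  have hw_meas : Measurable w :=
    (hvsub.1.stronglyMeasurable_mk.measurable).sub (hv.1.stronglyMeasurable_mk.measurable)
  have hp_meas : Measurable p := hw_meas.max measurable_const
  have hw2 : MemLp w 2 μ := by
    have := hvs2.sub hvv2
    exact this.ae_eq (Filter.Eventually.of_forall fun x => rfl)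
  have hp2 : MemLp p 2 μ := by
    refine hw2.of_le hp_meas.aestronglyMeasurable ?_
    filter_upwards with x
    rw [Real.norm_eq_abs, Real.norm_eq_abs]
    rcases le_total (w x) 0 with h | h
    · rw [hpdef]; simp only [max_eq_right h, abs_zero]; exact abs_nonneg _
    · rw [hpdef]; simp only [max_eq_left h]; exact le_refl _
  have hw1 : Integrable w μ := hw2.integrable one_le_two
  have hp1 : Integrable p μ := hp2.integrable one_le_two
  have hp_nonneg : ∀ x, 0 ≤ p x := fun x => le_max_right _ _
  -- the "hazard" coefficient
  set A : EuclideanSpace ℝ (Fin N) → ℝ := fun x => ∫ y in Ωnlᶜ, K (x - y) with hAdef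
  set CK : ℝ := ∫ z, K z with hCKdef
  have hA_nonneg : ∀ x, 0 ≤ A x := fun x => integral_nonneg fun y => hK0 _
  have hA_le : ∀ x, A x ≤ CK := by
    intro x
    calc A x ≤ ∫ y, K (x - y) :=
          setIntegral_le_integral (hKxint x) (Filter.Eventually.of_forall fun y => hK0 _)
      _ = CK := nlcp_integral_comp K x
  have hA_meas : Measurable A := by
    have h1 : StronglyMeasurable
        (fun q : EuclideanSpace ℝ (Fin N) × EuclideanSpace ℝ (Fin N) =>
          K (q.1 - q.2) * Set.indicator Ωnlᶜ (fun _ => (1:ℝ)) q.2) := by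
      apply Measurable.stronglyMeasurable
      exact (hKmeas.comp (measurable_fst.sub measurable_snd)).mul
        ((measurable_const.indicator hΩnl_open.measurableSet.compl).comp measurable_snd)
    have h2 := h1.integral_prod_right' (ν := volume)
    have h3 : A = fun x => ∫ y, K (x - y) * Set.indicator Ωnlᶜ (fun _ => (1:ℝ)) y := by
      funext x
      rw [hAdef]
      simp only
      rw [← integral_indicator hΩnl_open.measurableSet.compl]
      congr 1
      funext y
      by_cases hy : y ∈ Ωnlᶜ
      · rw [Set.indicator_of_mem hy, Set.indicator_of_mem hy, mul_one]
      · rw [Set.indicator_of_notMem hy, Set.indicator_of_notMem hy, mul_zero]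
    rw [h3]
    exact h2.measurable
  -- Step 1: pointwise inequality for the difference
  have hub_int : Integrable (Set.indicator Ωl u) volume := by
    rw [integrable_indicator_iff hΩl_open.measurableSet]
    exact hu.integrable one_le_two
  have hint_out : ∀ (x : EuclideanSpace ℝ (Fin N)) (a : ℝ),
      IntegrableOn (fun y => K (x - y) * (Set.indicator Ωl u y - a)) Ωnlᶜ volume := by
    intro x a
    have h1 : Integrable (fun y => K (x - y) * Set.indicator Ωl u y) volume :=
      Integrable.bdd_mul hub_int (hKxmeas x).aestronglyMeasurable (Filter.Eventually.of_forall fun y => hKxnorm x y)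
    have h2 : Integrable (fun y => K (x - y) * a) volume := (hKxint x).mul_const a
    have h3 := h1.sub h2
    refine (h3.congr ?_).integrableOn
    filter_upwards with y
    show K (x - y) * Set.indicator Ωl u y - K (x - y) * a = _
    ring
  have hint_in : ∀ (x : EuclideanSpace ℝ (Fin N)) (g : EuclideanSpace ℝ (Fin N) → ℝ),
      MemLp g 2 μ → ∀ (a : ℝ), Integrable (fun y => K (x - y) * (g y - a)) μ := by
    intro x g hg a
    exact Integrable.bdd_mul ((hg.integrable one_le_two).sub (integrable_const a))
      (hKxmeas x).aestronglyMeasurable (Filter.Eventually.of_forall fun y => hKxnorm x y)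
  have step1 : ∀ᵐ x ∂μ,
      0 ≤ -(w x) * A x + 2 * ∫ y, K (x - y) * (w y - w x) ∂μ := by
    filter_upwards [hsub, hsol, hvs, hvv] with x hsubx hsolx hvsx hvvx
    -- convert the J-integrals into K-integrals with measurable representatives
    have conv1 : ∀ a : ℝ, (∫ y in Ωnlᶜ, J (x - y) * (Set.indicator Ωl u y - a)) =
        ∫ y in Ωnlᶜ, K (x - y) * (Set.indicator Ωl u y - a) := by
      intro a
      apply integral_congr_ae
      filter_upwards [ae_restrict_of_ae (hKx x)] with y h1
      rw [h1]
    have conv2 : ∀ a : ℝ, (∫ y, J (x - y) * (vsub y - a) ∂μ) =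
        ∫ y, K (x - y) * (vs y - a) ∂μ := by
      intro a
      apply integral_congr_ae
      filter_upwards [hvs, ae_restrict_of_ae (hKx x)] with y h1 h2
      rw [h1, h2]
    have conv3 : ∀ a : ℝ, (∫ y, J (x - y) * (v y - a) ∂μ) =
        ∫ y, K (x - y) * (vv y - a) ∂μ := by
      intro a
      apply integral_congr_ae
      filter_upwards [hvv, ae_restrict_of_ae (hKx x)] with y h1 h2
      rw [h1, h2]
    rw [hvsx, conv1 (vs x), conv2 (vs x)] at hsubx
    rw [hvvx, conv1 (vv x), conv3 (vv x)] at hsolx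
    have e1 : (∫ y in Ωnlᶜ, K (x - y) * (Set.indicator Ωl u y - vs x)) -
        (∫ y in Ωnlᶜ, K (x - y) * (Set.indicator Ωl u y - vv x)) = -(w x) * A x := by
      rw [← integral_sub (hint_out x (vs x)) (hint_out x (vv x))]
      have : ∀ y : EuclideanSpace ℝ (Fin N),
          K (x - y) * (Set.indicator Ωl u y - vs x) - K (x - y) * (Set.indicator Ωl u y - vv x)
          = K (x - y) * (vv x - vs x) := fun y => by ring
      rw [integral_congr_ae (Filter.Eventually.of_forall this), integral_mul_const]
      have : -(w x) = vv x - vs x := by rw [hwdef]; ring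
      rw [this, mul_comm]
    have e2 : (∫ y, K (x - y) * (vs y - vs x) ∂μ) - (∫ y, K (x - y) * (vv y - vv x) ∂μ)
        = ∫ y, K (x - y) * (w y - w x) ∂μ := by
      rw [← integral_sub (hint_in x vs hvs2 (vs x)) (hint_in x vv hvv2 (vv x))]
      apply integral_congr_ae
      filter_upwards with y
      rw [hwdef]
      ring
    linarith [hsubx, hsolx.le, hsolx.ge, e1, e2]
  -- Step 2: energy estimates give the two vanishing statements
  set m : EuclideanSpace ℝ (Fin N) → ℝ := fun x => 1 + (w x)^2 + (p x)^2 with hmdef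
  have hm1 : ∀ x, 1 ≤ m x := fun x => by
    simp only [hmdef]; nlinarith [sq_nonneg (w x), sq_nonneg (p x)]
  have hm0 : ∀ x, 0 ≤ m x := fun x => le_trans zero_le_one (hm1 x)
  have hm_int : Integrable m μ := by
    have h1 : Integrable (fun x => w x * w x) μ := integrable_mul_of_memL2 hw2 hw2
    have h2 : Integrable (fun x => p x * p x) μ := integrable_mul_of_memL2 hp2 hp2
    have h3 := (integrable_const (1:ℝ)).add (h1.add h2)
    refine h3.congr ?_
    filter_upwards with x
    show 1 + (w x * w x + p x * p x) = m x
    simp only [hmdef]; ring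
  have hmaj : Integrable (fun q : EuclideanSpace ℝ (Fin N) × EuclideanSpace ℝ (Fin N) =>
      m q.1 * m q.2) (μ.prod μ) := hm_int.mul_prod hm_int
  have hm_ge : ∀ q : EuclideanSpace ℝ (Fin N) × EuclideanSpace ℝ (Fin N),
      (w q.1)^2 + (w q.2)^2 + (p q.1)^2 + (p q.2)^2 + 1 ≤ 3 * (m q.1 * m q.2) := by
    intro q
    simp only [hmdef]
    nlinarith [sq_nonneg (w q.1), sq_nonneg (w q.2), sq_nonneg (p q.1), sq_nonneg (p q.2),
      mul_nonneg (sq_nonneg (w q.1)) (sq_nonneg (w q.2)),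
      mul_nonneg (sq_nonneg (w q.1)) (sq_nonneg (p q.2)),
      mul_nonneg (sq_nonneg (p q.1)) (sq_nonneg (w q.2)),
      mul_nonneg (sq_nonneg (p q.1)) (sq_nonneg (p q.2))]
  have key : ∀ (F : EuclideanSpace ℝ (Fin N) × EuclideanSpace ℝ (Fin N) → ℝ), Measurable F →
      (∀ q, |F q| ≤ 6 * M' * (m q.1 * m q.2)) → Integrable F (μ.prod μ) := by
    intro F hFmeas hFb
    refine Integrable.mono' (hmaj.const_mul (6 * M')) hFmeas.aestronglyMeasurable ?_
    filter_upwards with q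
    rw [Real.norm_eq_abs]
    exact hFb q
  have hbd : ∀ (q : EuclideanSpace ℝ (Fin N) × EuclideanSpace ℝ (Fin N)) (a b : ℝ),
      a^2 + b^2 ≤ 4 * ((w q.1)^2 + (w q.2)^2 + (p q.1)^2 + (p q.2)^2 + 1) →
      |K (q.1 - q.2) * (a * b)| ≤ 6 * M' * (m q.1 * m q.2) := by
    intro q a b hab
    have h0 : |K (q.1 - q.2) * (a * b)| ≤ M' * ((a^2 + b^2)/2) := by
      rw [abs_mul, abs_of_nonneg (hK0 _), abs_mul]
      exact mul_le_mul (hKM _) (nlcp_abs_mul_le a b) (mul_nonneg (abs_nonneg _) (abs_nonneg _)) hM'0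
    calc |K (q.1 - q.2) * (a * b)| ≤ M' * ((a^2 + b^2)/2) := h0
      _ ≤ M' * (6 * (m q.1 * m q.2)) := by
          apply mul_le_mul_of_nonneg_left _ hM'0
          nlinarith [hm_ge q]
      _ = 6 * M' * (m q.1 * m q.2) := by ring
  have hKq_meas : Measurable (fun q : EuclideanSpace ℝ (Fin N) × EuclideanSpace ℝ (Fin N) =>
      K (q.1 - q.2)) := hKmeas.comp (measurable_fst.sub measurable_snd)
  have hw1q : Measurable (fun q : EuclideanSpace ℝ (Fin N) × EuclideanSpace ℝ (Fin N) => w q.1) :=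
    hw_meas.comp measurable_fst
  have hw2q : Measurable (fun q : EuclideanSpace ℝ (Fin N) × EuclideanSpace ℝ (Fin N) => w q.2) :=
    hw_meas.comp measurable_snd
  have hp1q : Measurable (fun q : EuclideanSpace ℝ (Fin N) × EuclideanSpace ℝ (Fin N) => p q.1) :=
    hp_meas.comp measurable_fst
  have hp2q : Measurable (fun q : EuclideanSpace ℝ (Fin N) × EuclideanSpace ℝ (Fin N) => p q.2) :=
    hp_meas.comp measurable_snd
  have hF1 : Integrable (fun q : EuclideanSpace ℝ (Fin N) × EuclideanSpace ℝ (Fin N) =>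
      K (q.1 - q.2) * ((w q.2 - w q.1) * p q.1)) (μ.prod μ) := by
    refine key _ (hKq_meas.mul ((hw2q.sub hw1q).mul hp1q)) fun q => ?_
    refine hbd q _ _ ?_
    nlinarith [sq_nonneg (w q.2 + w q.1), sq_nonneg (p q.2)]
  have hF2 : Integrable (fun q : EuclideanSpace ℝ (Fin N) × EuclideanSpace ℝ (Fin N) =>
      K (q.1 - q.2) * ((w q.2 - w q.1) * p q.2)) (μ.prod μ) := by
    refine key _ (hKq_meas.mul ((hw2q.sub hw1q).mul hp2q)) fun q => ?_
    refine hbd q _ _ ?_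
    nlinarith [sq_nonneg (w q.2 + w q.1), sq_nonneg (p q.1)]
  have hF3 : Integrable (fun q : EuclideanSpace ℝ (Fin N) × EuclideanSpace ℝ (Fin N) =>
      K (q.1 - q.2) * ((w q.2 - w q.1) * (p q.2 - p q.1))) (μ.prod μ) := by
    refine key _ (hKq_meas.mul ((hw2q.sub hw1q).mul (hp2q.sub hp1q))) fun q => ?_
    refine hbd q _ _ ?_
    nlinarith [sq_nonneg (w q.2 + w q.1), sq_nonneg (p q.2 + p q.1)]
  have hF4 : Integrable (fun q : EuclideanSpace ℝ (Fin N) × EuclideanSpace ℝ (Fin N) =>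
      K (q.1 - q.2) * (p q.2 - p q.1)^2) (μ.prod μ) := by
    have : ∀ q : EuclideanSpace ℝ (Fin N) × EuclideanSpace ℝ (Fin N),
        K (q.1 - q.2) * (p q.2 - p q.1)^2 = K (q.1 - q.2) * ((p q.2 - p q.1) * (p q.2 - p q.1)) :=
      fun q => by ring
    refine Integrable.congr (key _ (hKq_meas.mul ((hp2q.sub hp1q).mul (hp2q.sub hp1q)))
      fun q => ?_) (Filter.Eventually.of_forall fun q => (this q).symm)
    refine hbd q _ _ ?_
    simp only [Pi.sub_apply]
    nlinarith [sq_nonneg (w q.1), sq_nonneg (w q.2), sq_nonneg (p q.2 + p q.1)]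
  have hT1int : Integrable (fun x => A x * (p x * w x)) μ :=
    Integrable.bdd_mul (integrable_mul_of_memL2 hp2 hw2) hA_meas.aestronglyMeasurable
      (Filter.Eventually.of_forall fun x => by rw [Real.norm_eq_abs, abs_of_nonneg (hA_nonneg x)]; exact hA_le x)
  have c0 : 0 ≤ ∫ x, p x * (-(w x) * A x + 2 * ∫ y, K (x - y) * (w y - w x) ∂μ) ∂μ := by
    apply integral_nonneg_of_ae
    filter_upwards [step1] with x hx
    exact mul_nonneg (hp_nonneg x) hx
  have hIint : Integrable (fun x => ∫ y, K (x - y) * ((w y - w x) * p x) ∂μ) μ :=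
    hF1.integral_prod_left
  have split : (∫ x, p x * (-(w x) * A x + 2 * ∫ y, K (x - y) * (w y - w x) ∂μ) ∂μ)
      = 2 * (∫ q, K (q.1 - q.2) * ((w q.2 - w q.1) * p q.1) ∂(μ.prod μ)) -
        ∫ x, A x * (p x)^2 ∂μ := by
    have e0 : ∀ x, p x * (-(w x) * A x + 2 * ∫ y, K (x - y) * (w y - w x) ∂μ)
        = 2 * (∫ y, K (x - y) * ((w y - w x) * p x) ∂μ) - A x * (p x * w x) := by
      intro x
      have h5 : ∫ y, K (x - y) * ((w y - w x) * p x) ∂μ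
          = (∫ y, K (x - y) * (w y - w x) ∂μ) * p x := by
        rw [← integral_mul_const]
        congr 1; funext y; ring
      rw [h5]; ring
    rw [integral_congr_ae (Filter.Eventually.of_forall e0),
      integral_sub (hIint.const_mul 2) hT1int, integral_const_mul,
      integral_integral hF1]
    have h6 : (∫ x, A x * (p x * w x) ∂μ) = ∫ x, A x * (p x)^2 ∂μ := by
      apply integral_congr_ae (Filter.Eventually.of_forall fun x => ?_)
      show A x * (p x * w x) = A x * (p x)^2
      simp only [hpdef]
      rw [nlcp_mul_self (w x)]
    rw [h6]
  have hswap : ∀ (H : EuclideanSpace ℝ (Fin N) × EuclideanSpace ℝ (Fin N) → ℝ),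
      AEStronglyMeasurable H (μ.prod μ) →
      ∫ q, H q ∂(μ.prod μ) = ∫ q, H (q.2, q.1) ∂(μ.prod μ) := by
    intro H hH
    calc ∫ q, H q ∂(μ.prod μ) = ∫ q, H q ∂(Measure.map Prod.swap (μ.prod μ)) := by
          rw [Measure.prod_swap]
      _ = ∫ q, H (Prod.swap q) ∂(μ.prod μ) := integral_map measurable_swap.aemeasurable
          (by rw [Measure.prod_swap]; exact hH)
  have hT2' : (∫ q, K (q.1 - q.2) * ((w q.2 - w q.1) * p q.1) ∂(μ.prod μ))
      = - ∫ q, K (q.1 - q.2) * ((w q.2 - w q.1) * p q.2) ∂(μ.prod μ) := by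
    rw [hswap (fun q => K (q.1 - q.2) * ((w q.2 - w q.1) * p q.1)) (hKq_meas.mul ((hw2q.sub hw1q).mul hp1q)).aestronglyMeasurable, ← integral_neg]
    apply integral_congr_ae (Filter.Eventually.of_forall fun q => ?_)
    show K (q.2 - q.1) * ((w q.1 - w q.2) * p q.2)
        = -(K (q.1 - q.2) * ((w q.2 - w q.1) * p q.2))
    have h6 : K (q.2 - q.1) = K (q.1 - q.2) := by rw [← neg_sub q.1 q.2, hKsymm]
    rw [h6]; ring
  have hsplit2 : (∫ q, K (q.1 - q.2) * ((w q.2 - w q.1) * (p q.2 - p q.1)) ∂(μ.prod μ))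
      = - 2 * ∫ q, K (q.1 - q.2) * ((w q.2 - w q.1) * p q.1) ∂(μ.prod μ) := by
    have h7 : ∀ q : EuclideanSpace ℝ (Fin N) × EuclideanSpace ℝ (Fin N),
        K (q.1 - q.2) * ((w q.2 - w q.1) * (p q.2 - p q.1))
        = K (q.1 - q.2) * ((w q.2 - w q.1) * p q.2)
          - K (q.1 - q.2) * ((w q.2 - w q.1) * p q.1) := fun q => by ring
    rw [integral_congr_ae (Filter.Eventually.of_forall h7), integral_sub hF2 hF1]
    linarith [hT2']
  have hmono : (∫ q, K (q.1 - q.2) * (p q.2 - p q.1)^2 ∂(μ.prod μ))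
      ≤ ∫ q, K (q.1 - q.2) * ((w q.2 - w q.1) * (p q.2 - p q.1)) ∂(μ.prod μ) := by
    apply integral_mono_ae hF4 hF3
    filter_upwards with q
    have := nlcp_sq_le (w q.1) (w q.2)
    simp only [hpdef]
    exact mul_le_mul_of_nonneg_left this (hK0 _)
  have hT1nonneg : 0 ≤ ∫ x, A x * (p x)^2 ∂μ :=
    integral_nonneg fun x => mul_nonneg (hA_nonneg x) (sq_nonneg _)
  have hS2nonneg : 0 ≤ ∫ q, K (q.1 - q.2) * (p q.2 - p q.1)^2 ∂(μ.prod μ) :=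
    integral_nonneg fun q => mul_nonneg (hK0 _) (sq_nonneg _)
  have hT1zero : (∫ x, A x * (p x)^2 ∂μ) = 0 := by
    rw [split] at c0
    linarith
  have hS2zero : (∫ q, K (q.1 - q.2) * (p q.2 - p q.1)^2 ∂(μ.prod μ)) = 0 := by
    rw [split] at c0
    linarith
  have vanish1 : ∀ᵐ x ∂μ, A x * (p x)^2 = 0 := by
    have hint : Integrable (fun x => A x * (p x)^2) μ := by
      refine hT1int.congr (Filter.Eventually.of_forall fun x => ?_)
      show A x * (p x * w x) = A x * (p x)^2
      simp only [hpdef]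
      rw [nlcp_mul_self (w x)]
    have h8 := (integral_eq_zero_iff_of_nonneg_ae
      (Filter.Eventually.of_forall fun x => mul_nonneg (hA_nonneg x) (sq_nonneg _)) hint).mp hT1zero
    filter_upwards [h8] with x hx
    exact hx
  have vanish2 : ∀ᵐ q ∂(μ.prod μ), K (q.1 - q.2) * (p q.2 - p q.1)^2 = 0 := by
    have h9 := (integral_eq_zero_iff_of_nonneg_ae
      (Filter.Eventually.of_forall fun q => mul_nonneg (hK0 _) (sq_nonneg _)) hF4).mp hS2zero
    filter_upwards [h9] with q hq
    exact hq
  -- Step 3: the pair property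
  have hpair : ∀ᵐ x ∂μ, ∀ᵐ y ∂μ, dist x y ≤ 2*δ → p y = p x := by
    have hKJnull : volume {z : EuclideanSpace ℝ (Fin N) | ¬ K z = J z} = 0 := ae_iff.mp hKJ
    set T : Set (EuclideanSpace ℝ (Fin N)) :=
      toMeasurable volume {z : EuclideanSpace ℝ (Fin N) | ¬ K z = J z} with hTdef
    have hTmeas : MeasurableSet T := measurableSet_toMeasurable _ _
    have hTnull : volume T = 0 := by
      rw [hTdef, measure_toMeasurable]
      exact hKJnull
    have hprodnull : (μ.prod μ) {q : EuclideanSpace ℝ (Fin N) × EuclideanSpace ℝ (Fin N) |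
        q.1 - q.2 ∈ T} = 0 := by
      have hsm : MeasurableSet {q : EuclideanSpace ℝ (Fin N) × EuclideanSpace ℝ (Fin N) |
          q.1 - q.2 ∈ T} := (measurable_fst.sub measurable_snd) hTmeas
      rw [Measure.measure_prod_null hsm]
      refine Filter.Eventually.of_forall fun x => ?_
      show μ (Prod.mk x ⁻¹' {q : EuclideanSpace ℝ (Fin N) × EuclideanSpace ℝ (Fin N) |
          q.1 - q.2 ∈ T}) = 0
      have hpre : Prod.mk x ⁻¹' {q : EuclideanSpace ℝ (Fin N) × EuclideanSpace ℝ (Fin N) |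
          q.1 - q.2 ∈ T} = (fun y => x - y) ⁻¹' T := rfl
      rw [hpre]
      have hmeaspre : MeasurableSet ((fun y : EuclideanSpace ℝ (Fin N) => x - y) ⁻¹' T) :=
        (measurable_const.sub measurable_id) hTmeas
      apply le_antisymm _ zero_le
      calc μ ((fun y : EuclideanSpace ℝ (Fin N) => x - y) ⁻¹' T)
          = volume (((fun y : EuclideanSpace ℝ (Fin N) => x - y) ⁻¹' T) ∩ Ωnl) := by
            rw [hμdef, Measure.restrict_apply hmeaspre]
        _ ≤ volume ((fun y : EuclideanSpace ℝ (Fin N) => x - y) ⁻¹' T) :=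
            measure_mono Set.inter_subset_left
        _ = volume T := (Measure.measurePreserving_sub_left volume x).measure_preimage
            hTmeas.nullMeasurableSet
        _ = 0 := hTnull
    have h1 : ∀ᵐ q ∂(μ.prod μ), q.1 - q.2 ∉ T := by
      rw [ae_iff]
      convert hprodnull using 2
      ext q
      simp
    have hpair0 : ∀ᵐ q ∂(μ.prod μ), dist q.1 q.2 ≤ 2*δ → p q.2 = p q.1 := by
      filter_upwards [h1, vanish2] with q hq1 hq2
      intro hdist
      have hKq : K (q.1 - q.2) = J (q.1 - q.2) := by
        by_contra hne
        exact hq1 (subset_toMeasurable _ _ hne)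
      have hcK : c ≤ K (q.1 - q.2) := by
        rw [hKq]
        apply hc
        rwa [← dist_eq_norm]
      have hKpos : K (q.1 - q.2) ≠ 0 := (lt_of_lt_of_le hcpos hcK).ne'
      rcases mul_eq_zero.mp hq2 with h | h
      · exact absurd h hKpos
      · have := pow_eq_zero_iff (n := 2) (by norm_num) |>.mp h
        linarith [this]
    exact Measure.ae_ae_of_ae_prod hpair0
  -- Step 4: the seed
  obtain ⟨x₀, hx₀, y₀, hy₀, hdxy⟩ := hP1
  have hseed : ∀ᵐ x ∂μ, x ∈ ball y₀ (δ/2) → p x = 0 := by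
    obtain ⟨ρ₀, hρ₀pos, hρ₀⟩ := Metric.isOpen_iff.mp hΩl_open x₀ hx₀
    set ρ := min ρ₀ (δ/2) with hρdef
    have hρpos : 0 < ρ := lt_min hρ₀pos (by linarith)
    have hsubl : ball x₀ ρ ⊆ Ωnlᶜ := by
      intro y hy
      have hyl : y ∈ Ωl := hρ₀ (ball_subset_ball (min_le_left _ _) hy)
      intro hyn
      exact Set.eq_empty_iff_forall_notMem.mp hdisj y ⟨hyl, hyn⟩
    have hApos : ∀ x ∈ ball y₀ (δ/2), 0 < A x := by
      intro x hx
      have hKc : ∀ᵐ y ∂(volume.restrict (ball x₀ ρ)), c ≤ K (x - y) := by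
        filter_upwards [ae_restrict_of_ae (hKx x), ae_restrict_mem measurableSet_ball]
          with y h1 h2
        rw [h1]
        apply hc
        rw [← dist_eq_norm]
        have d1 : dist x y₀ < δ/2 := mem_ball.mp hx
        have d2 : dist x₀ y < ρ := by rw [dist_comm]; exact mem_ball.mp h2
        have d3 : dist y₀ x₀ < δ := by rw [dist_comm]; exact hdxy
        have d4 : ρ ≤ δ/2 := min_le_right _ _
        calc dist x y ≤ dist x y₀ + dist y₀ x₀ + dist x₀ y := dist_triangle4 _ _ _ _
          _ ≤ 2*δ := by linarith
      have hvolpos : 0 < (volume (ball x₀ ρ)).toReal :=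
        ENNReal.toReal_pos (measure_ball_pos _ _ hρpos).ne' measure_ball_lt_top.ne
      have hstep : c * (volume (ball x₀ ρ)).toReal ≤ A x := by
        calc c * (volume (ball x₀ ρ)).toReal = ∫ _ in ball x₀ ρ, c := by
              rw [setIntegral_const, smul_eq_mul, mul_comm]; rfl
          _ ≤ ∫ y in ball x₀ ρ, K (x - y) := setIntegral_mono_ae_restrict
              (integrableOn_const measure_ball_lt_top.ne)
              ((hKxint x).integrableOn) hKc
          _ ≤ A x := setIntegral_mono_set ((hKxint x).integrableOn)
              (Filter.Eventually.of_forall fun y => hK0 _) (HasSubset.Subset.eventuallyLE hsubl)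
      exact lt_of_lt_of_le (mul_pos hcpos hvolpos) hstep
    filter_upwards [vanish1] with x hx hxball
    rcases mul_eq_zero.mp hx with h | h
    · exact absurd h (hApos x hxball).ne'
    · exact pow_eq_zero_iff (n := 2) (by norm_num) |>.mp h
  -- propagation
  have hfinal : ∀ᵐ x ∂μ, p x = 0 := by
    rw [hμdef]
    refine nlcp_propagation hδ hΩnl_open hΩnl_conn p ?_ ⟨y₀, hy₀, δ/2, by linarith, ?_⟩
    · rw [← hμdef]; exact hpair
    · rw [← hμdef]; exact hseed
  filter_upwards [hfinal, hvs, hvv] with x h1 h2 h3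
  rw [h2, h3]
  have hwx : w x ≤ 0 := by
    by_contra hcon
    push_neg at hcon
    have : p x = w x := max_eq_left hcon.le
    rw [h1] at this
    exact hcon.ne' this.symm
  simpa [hwdef, sub_nonpos] using hwx
end

section
/- Let Ω_ℓ and Ω_{nℓ} be disjoint open bounded subsets of ℝ^N with Ω_{nℓ} δ-connected and dist(Ω_ℓ, Ω_{nℓ}) < δ (condition (P1)), and let J satisfy (J1) and (J2). Suppose f₁, f₂ ∈ L²(Ω_{nℓ}) with f₁ ≤ f₂ a.e. in Ω_{nℓ}, u₁, u₂ ∈ L²(Ω_ℓ) with u₁ ≤ u₂ a.e. in Ω_ℓ, and for i = 1, 2 let v_i ∈ L²(Ω_{nℓ}) be the solution of the nonlocal problem with data (f_i, u_i). Then v₁ ≤ v₂ almost everywhere in Ω_{nℓ}. -/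
open MeasureTheory Metric

set_option maxHeartbeats 2000000

/-- If `f p.1 = f p.2` for a.e. pair, and the measure is nonzero, then `f` is a.e. constant. -/
lemma aux_ae_const {α : Type*} [MeasurableSpace α] {μ : Measure α} [SFinite μ] (hμ : μ ≠ 0)
    {f : α → ℝ} (h : ∀ᵐ p ∂(μ.prod μ), f p.1 = f p.2) : ∃ k, ∀ᵐ x ∂μ, f x = k := by
  haveI : (ae μ).NeBot := ae_neBot.2 hμ
  obtain ⟨x₀, hx₀⟩ := (Measure.ae_ae_of_ae_prod h).exists
  exact ⟨f x₀, hx₀.mono fun y hy => hy.symm⟩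

/-- Pull back an a.e.-volume property through `(x, y) ↦ x - y` on a product of submeasures
of volume. -/
lemma aux_pull {N : ℕ} {P : EuclideanSpace ℝ (Fin N) → Prop}
    (h : ∀ᵐ z ∂(volume : Measure (EuclideanSpace ℝ (Fin N))), P z)
    (μ ν : Measure (EuclideanSpace ℝ (Fin N))) (hμ : μ ≤ volume) (hν : ν ≤ volume)
    [SFinite μ] [SFinite ν] : ∀ᵐ p ∂(μ.prod ν), P (p.1 - p.2) := by
  rw [ae_iff] at h ⊢
  set Nm := toMeasurable volume {z | ¬ P z} with hNmdef
  have hNm : volume Nm = 0 := by rwa [measure_toMeasurable]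
  have hmeas : MeasurableSet Nm := measurableSet_toMeasurable _ _
  have hsub : {p : _ × _ | ¬ P (p.1 - p.2)} ⊆
      (fun p : EuclideanSpace ℝ (Fin N) × EuclideanSpace ℝ (Fin N) => p.1 - p.2) ⁻¹' Nm :=
    fun p hp => subset_toMeasurable _ _ hp
  refine measure_mono_null hsub ?_
  have hpre : MeasurableSet
      ((fun p : EuclideanSpace ℝ (Fin N) × EuclideanSpace ℝ (Fin N) => p.1 - p.2) ⁻¹' Nm) :=
    (measurable_fst.sub measurable_snd) hmeas
  rw [Measure.prod_apply hpre]
  have hz : ∀ x, ν (Prod.mk x ⁻¹'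
      ((fun p : EuclideanSpace ℝ (Fin N) × EuclideanSpace ℝ (Fin N) => p.1 - p.2) ⁻¹' Nm)) = 0 := by
    intro x
    refine le_antisymm ?_ zero_le
    calc ν (Prod.mk x ⁻¹' ((fun p : EuclideanSpace ℝ (Fin N) × EuclideanSpace ℝ (Fin N) =>
            p.1 - p.2) ⁻¹' Nm))
        ≤ volume ((fun y => x - y) ⁻¹' Nm) := Measure.le_iff'.1 hν _
      _ = volume Nm :=
          (Measure.measurePreserving_sub_left volume x).measure_preimage hmeas.nullMeasurableSet
      _ = 0 := hNm
  simp [hz]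

/-- Monotone dependence on the data: if `f₁ ≤ f₂` and `u₁ ≤ u₂`, then the corresponding
solutions of the nonlocal problem satisfy `v₁ ≤ v₂` a.e. in `Ω_{nℓ}`. -/
theorem nonlocal_monotone_dependence {N : ℕ} (δ : ℝ) (hδ : 0 < δ)
    (Ωl Ωnl : Set (EuclideanSpace ℝ (Fin N)))
    (hΩl_open : IsOpen Ωl) (hΩl_bdd : Bornology.IsBounded Ωl)
    (hΩnl_open : IsOpen Ωnl) (hΩnl_bdd : Bornology.IsBounded Ωnl)
    (hdisj : Ωl ∩ Ωnl = ∅)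
    (hΩnl_conn : DeltaConnected δ Ωnl)
    (hP1 : ∃ x ∈ Ωl, ∃ y ∈ Ωnl, dist x y < δ)
    (J : EuclideanSpace ℝ (Fin N) → ℝ)
    (hJ_nonneg : ∀ z, 0 ≤ J z)
    (hJ_symm : ∀ z, J (-z) = J z)
    (hJ_bdd : ∃ M : ℝ, ∀ z, J z ≤ M)
    (hJ_int : Integrable J)
    (hJ1 : ∃ c > (0 : ℝ), ∀ z, ‖z‖ ≤ 2 * δ → c ≤ J z)
    (hJ2 : ∃ K : Lp ℝ 2 (volume.restrict Ωnl) →L[ℝ] Lp ℝ 2 (volume.restrict Ωnl),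
      IsCompactOperator K ∧ ∀ w : Lp ℝ 2 (volume.restrict Ωnl),
        ∀ᵐ x ∂(volume.restrict Ωnl), K w x = ∫ y in Ωnl, J (x - y) * w y)
    (f₁ f₂ : EuclideanSpace ℝ (Fin N) → ℝ)
    (hf₁ : MemLp f₁ 2 (volume.restrict Ωnl)) (hf₂ : MemLp f₂ 2 (volume.restrict Ωnl))
    (hf : ∀ᵐ x ∂(volume.restrict Ωnl), f₁ x ≤ f₂ x)
    (u₁ u₂ : EuclideanSpace ℝ (Fin N) → ℝ)
    (hu₁ : MemLp u₁ 2 (volume.restrict Ωl)) (hu₂ : MemLp u₂ 2 (volume.restrict Ωl))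
    (hu : ∀ᵐ x ∂(volume.restrict Ωl), u₁ x ≤ u₂ x)
    (v₁ v₂ : EuclideanSpace ℝ (Fin N) → ℝ)
    (hv₁ : MemLp v₁ 2 (volume.restrict Ωnl)) (hv₂ : MemLp v₂ 2 (volume.restrict Ωnl))
    (hsol₁ : ∀ᵐ x ∂(volume.restrict Ωnl),
      -f₁ x = (∫ y in Ωnlᶜ, J (x - y) * (Set.indicator Ωl u₁ y - v₁ x)) +
        2 * ∫ y in Ωnl, J (x - y) * (v₁ y - v₁ x))
    (hsol₂ : ∀ᵐ x ∂(volume.restrict Ωnl),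
      -f₂ x = (∫ y in Ωnlᶜ, J (x - y) * (Set.indicator Ωl u₂ y - v₂ x)) +
        2 * ∫ y in Ωnl, J (x - y) * (v₂ y - v₂ x)) :
    ∀ᵐ x ∂(volume.restrict Ωnl), v₁ x ≤ v₂ x := by
  classical
  have hΩnl_meas : MeasurableSet Ωnl := hΩnl_open.measurableSet
  have hΩl_meas : MeasurableSet Ωl := hΩl_open.measurableSet
  obtain ⟨x₀, hx₀, y₀, hy₀, hxy₀⟩ := hP1
  haveI hfactnl : Fact ((volume : Measure (EuclideanSpace ℝ (Fin N))) Ωnl < ⊤) :=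
    ⟨hΩnl_bdd.measure_lt_top⟩
  haveI hfactl : Fact ((volume : Measure (EuclideanSpace ℝ (Fin N))) Ωl < ⊤) :=
    ⟨hΩl_bdd.measure_lt_top⟩
  obtain ⟨M, hM⟩ := hJ_bdd
  have hM0 : 0 ≤ M := le_trans (hJ_nonneg 0) (hM 0)
  obtain ⟨c, hc, hJc⟩ := hJ1
  -- measurable modification of J
  have hg0_sm : StronglyMeasurable (hJ_int.1.mk J) := hJ_int.1.stronglyMeasurable_mk
  have hg0_ae : J =ᵐ[volume] hJ_int.1.mk J := hJ_int.1.ae_eq_mk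
  set Jm : EuclideanSpace ℝ (Fin N) → ℝ := fun z => min (max (hJ_int.1.mk J z) 0) M with hJmdef
  have hJm_meas : Measurable Jm := (hg0_sm.measurable.max measurable_const).min measurable_const
  have hJm_nonneg : ∀ z, 0 ≤ Jm z := fun z => le_min (le_max_right _ _) hM0
  have hJm_le : ∀ z, Jm z ≤ M := fun z => min_le_right _ _
  have hJm_ae : Jm =ᵐ[volume] J := by
    filter_upwards [hg0_ae] with z hz
    simp only [hJmdef, ← hz, max_eq_left (hJ_nonneg z), min_eq_left (hM z)]
  have hJm_int : Integrable Jm volume := hJ_int.congr hJm_ae.symm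
  have hJm_norm : ∀ z, ‖Jm z‖ ≤ M := fun z => by
    rw [Real.norm_eq_abs, abs_of_nonneg (hJm_nonneg z)]; exact hJm_le z
  have hJmx_int : ∀ x : EuclideanSpace ℝ (Fin N), Integrable (fun y => Jm (x - y)) volume :=
    fun x => ((Measure.measurePreserving_sub_left volume x).integrable_comp_emb
      (MeasurableEquiv.subLeft x).measurableEmbedding).mpr hJm_int
  have hJmy_int : ∀ y : EuclideanSpace ℝ (Fin N), Integrable (fun x => Jm (x - y)) volume :=
    fun y => ((measurePreserving_sub_right volume y).integrable_comp_emb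
      (MeasurableEquiv.subRight y).measurableEmbedding).mpr hJm_int
  have hJmx_aesm : ∀ (x : EuclideanSpace ℝ (Fin N)) (ρ : Measure (EuclideanSpace ℝ (Fin N))),
      AEStronglyMeasurable (fun y => Jm (x - y)) ρ := fun x ρ =>
    ((hJm_meas.comp (measurable_const.sub measurable_id)).stronglyMeasurable).aestronglyMeasurable
  have hJmy_aesm : ∀ (y : EuclideanSpace ℝ (Fin N)) (ρ : Measure (EuclideanSpace ℝ (Fin N))),
      AEStronglyMeasurable (fun x => Jm (x - y)) ρ := fun y ρ =>
    ((hJm_meas.comp (measurable_id.sub measurable_const)).stronglyMeasurable).aestronglyMeasurable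
  -- replace J by Jm in set integrals
  have hJJm : ∀ (x : EuclideanSpace ℝ (Fin N)) (S : Set (EuclideanSpace ℝ (Fin N)))
      (φ : EuclideanSpace ℝ (Fin N) → ℝ),
      (∫ y in S, J (x - y) * φ y) = ∫ y in S, Jm (x - y) * φ y := by
    intro x S φ
    apply integral_congr_ae
    have h1 : (fun y => J (x - y)) =ᵐ[(volume : Measure (EuclideanSpace ℝ (Fin N)))]
        fun y => Jm (x - y) :=
      (Measure.measurePreserving_sub_left volume x).quasiMeasurePreserving.ae_eq hJm_ae.symm
    filter_upwards [ae_restrict_of_ae h1] with y hy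
    rw [hy]
  -- the function w = v₁ - v₂ and its positive part W (measurable version)
  set w : EuclideanSpace ℝ (Fin N) → ℝ := fun x => v₁ x - v₂ x with hwdef
  have hw_mem : MemLp w 2 (volume.restrict Ωnl) := hv₁.sub hv₂
  have hg1_sm : StronglyMeasurable (hw_mem.1.mk w) := hw_mem.1.stronglyMeasurable_mk
  have hg1_ae : w =ᵐ[volume.restrict Ωnl] hw_mem.1.mk w := hw_mem.1.ae_eq_mk
  set W : EuclideanSpace ℝ (Fin N) → ℝ := fun x => max (hw_mem.1.mk w x) 0 with hWdef
  have hW_meas : Measurable W := hg1_sm.measurable.max measurable_const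
  have hW_nonneg : ∀ x, 0 ≤ W x := fun x => le_max_right _ _
  have hWw : ∀ᵐ x ∂(volume.restrict Ωnl), W x = max (w x) 0 := by
    filter_upwards [hg1_ae] with x hx
    exact congrArg (fun t => max t 0) hx.symm
  have hW_mem : MemLp W 2 (volume.restrict Ωnl) := by
    refine (hw_mem.ae_eq hg1_ae).of_le hW_meas.stronglyMeasurable.aestronglyMeasurable
      (Filter.Eventually.of_forall fun x => ?_)
    rw [Real.norm_eq_abs, abs_of_nonneg (hW_nonneg x), Real.norm_eq_abs]
    exact le_trans (max_le (le_abs_self _) (abs_nonneg _)) le_rfl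
  have hW_int : Integrable W (volume.restrict Ωnl) := hW_mem.integrable one_le_two
  have hW2_int : Integrable (fun x => W x ^ 2) (volume.restrict Ωnl) := hW_mem.integrable_sq
  have hwW : ∀ᵐ y ∂(volume.restrict Ωnl), w y ≤ W y := by
    filter_upwards [hWw] with y hy
    rw [hy]; exact le_max_left _ _
  have hv₁_int : Integrable v₁ (volume.restrict Ωnl) := hv₁.integrable one_le_two
  have hv₂_int : Integrable v₂ (volume.restrict Ωnl) := hv₂.integrable one_le_two
  -- the kernels m', m'', T'
  set m' : EuclideanSpace ℝ (Fin N) → ℝ := fun x => ∫ y in Ωnl, Jm (x - y) with hm'def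
  set m'' : EuclideanSpace ℝ (Fin N) → ℝ := fun y => ∫ x in Ωnl, Jm (x - y) with hm''def
  set T' : EuclideanSpace ℝ (Fin N) → ℝ := fun x => ∫ y in Ωnl, Jm (x - y) * W y with hT'def
  set I' : ℝ := ∫ z, Jm z with hI'def
  have hI'_nonneg : 0 ≤ I' := integral_nonneg fun z => hJm_nonneg z
  have hI'_eq : ∀ x : EuclideanSpace ℝ (Fin N), ∫ y, Jm (x - y) = I' := fun x =>
    (Measure.measurePreserving_sub_left volume x).integral_comp
      (MeasurableEquiv.subLeft x).measurableEmbedding Jm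
  have hI'_eq2 : ∀ y : EuclideanSpace ℝ (Fin N), ∫ x, Jm (x - y) = I' := fun y =>
    (measurePreserving_sub_right volume y).integral_comp
      (MeasurableEquiv.subRight y).measurableEmbedding Jm
  have ha'm' : ∀ x : EuclideanSpace ℝ (Fin N), (∫ y in Ωnlᶜ, Jm (x - y)) + m' x = I' := by
    intro x
    rw [← hI'_eq x, ← integral_add_compl hΩnl_meas (hJmx_int x)]
    ring
  have ha'_nonneg : ∀ x, 0 ≤ ∫ y in Ωnlᶜ, Jm (x - y) :=
    fun x => integral_nonneg fun y => hJm_nonneg _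
  have hm'_nonneg : ∀ x, 0 ≤ m' x := fun x => integral_nonneg fun y => hJm_nonneg _
  have hm'_le : ∀ x, m' x ≤ I' := fun x =>
    le_trans (setIntegral_le_integral (hJmx_int x)
      (Filter.Eventually.of_forall fun y => hJm_nonneg _)) (le_of_eq (hI'_eq x))
  have hm''_le : ∀ y, m'' y ≤ I' := fun y =>
    le_trans (setIntegral_le_integral (hJmy_int y)
      (Filter.Eventually.of_forall fun x => hJm_nonneg _)) (le_of_eq (hI'_eq2 y))
  have hm''_nonneg : ∀ y, 0 ≤ m'' y := fun y => integral_nonneg fun x => hJm_nonneg _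
  have hprod_meas : Measurable (fun p : EuclideanSpace ℝ (Fin N) × EuclideanSpace ℝ (Fin N) =>
      Jm (p.1 - p.2)) := hJm_meas.comp (measurable_fst.sub measurable_snd)
  have hm'_sm : StronglyMeasurable m' := by
    have : StronglyMeasurable (Function.uncurry fun x y =>
        Jm (x - y) : EuclideanSpace ℝ (Fin N) × EuclideanSpace ℝ (Fin N) → ℝ) :=
      hprod_meas.stronglyMeasurable
    exact this.integral_prod_right
  have hm''_sm : StronglyMeasurable m'' := by
    have : StronglyMeasurable (Function.uncurry fun x y =>
        Jm (x - y) : EuclideanSpace ℝ (Fin N) × EuclideanSpace ℝ (Fin N) → ℝ) :=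
      hprod_meas.stronglyMeasurable
    exact this.integral_prod_left
  have hT'_sm : StronglyMeasurable T' := by
    have : StronglyMeasurable (Function.uncurry fun x y =>
        Jm (x - y) * W y : EuclideanSpace ℝ (Fin N) × EuclideanSpace ℝ (Fin N) → ℝ) :=
      (hprod_meas.mul (hW_meas.comp measurable_snd)).stronglyMeasurable
    exact this.integral_prod_right
  have hJW_int : ∀ x, Integrable (fun y => Jm (x - y) * W y) (volume.restrict Ωnl) := fun x =>
    hW_int.bdd_mul (hJmx_aesm x _) (Filter.Eventually.of_forall fun y => hJm_norm _)
  have hT'_nonneg : ∀ x, 0 ≤ T' x :=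
    fun x => integral_nonneg fun y => mul_nonneg (hJm_nonneg _) (hW_nonneg _)
  have hT'_le : ∀ x, T' x ≤ M * ∫ y in Ωnl, W y := by
    intro x
    calc T' x ≤ ∫ y in Ωnl, M * W y :=
          integral_mono_ae (hJW_int x) (hW_int.const_mul M)
            (Filter.Eventually.of_forall fun y =>
              mul_le_mul_of_nonneg_right (hJm_le _) (hW_nonneg y))
      _ = M * ∫ y in Ωnl, W y := integral_const_mul M W
  -- integrability of indicator
  have hind_int : ∀ u : EuclideanSpace ℝ (Fin N) → ℝ, MemLp u 2 (volume.restrict Ωl) →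
      Integrable (Set.indicator Ωl u) volume := by
    intro u hu'
    exact (integrable_indicator_iff hΩl_meas).2 (hu'.integrable one_le_two)
  have hJind_int : ∀ (x : EuclideanSpace ℝ (Fin N)) (u : EuclideanSpace ℝ (Fin N) → ℝ),
      MemLp u 2 (volume.restrict Ωl) →
      Integrable (fun y => Jm (x - y) * Set.indicator Ωl u y) volume := fun x u hu' =>
    (hind_int u hu').bdd_mul (hJmx_aesm x _) (Filter.Eventually.of_forall fun y => hJm_norm _)
  -- structured form of the solution property
  have hstruct : ∀ f u v : EuclideanSpace ℝ (Fin N) → ℝ, MemLp u 2 (volume.restrict Ωl) →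
      MemLp v 2 (volume.restrict Ωnl) →
      (∀ᵐ x ∂(volume.restrict Ωnl),
        -f x = (∫ y in Ωnlᶜ, J (x - y) * (Set.indicator Ωl u y - v x)) +
          2 * ∫ y in Ωnl, J (x - y) * (v y - v x)) →
      ∀ᵐ x ∂(volume.restrict Ωnl),
        -f x = (∫ y in Ωnlᶜ, Jm (x - y) * Set.indicator Ωl u y) - (∫ y in Ωnlᶜ, Jm (x - y)) * v x
          + 2 * ((∫ y in Ωnl, Jm (x - y) * v y) - m' x * v x) := by
    intro f u v hu' hv' hsol
    have hv'_int : Integrable v (volume.restrict Ωnl) := hv'.integrable one_le_two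
    filter_upwards [hsol] with x hx
    rw [hx, hJJm x _ _, hJJm x _ _]
    have e1 : (∫ y in Ωnlᶜ, Jm (x - y) * (Set.indicator Ωl u y - v x)) =
        (∫ y in Ωnlᶜ, Jm (x - y) * Set.indicator Ωl u y) - (∫ y in Ωnlᶜ, Jm (x - y)) * v x := by
      simp_rw [mul_sub]
      rw [integral_sub ((hJind_int x u hu').integrableOn)
        (((hJmx_int x).mul_const (v x)).integrableOn), integral_mul_const]
    have e2 : (∫ y in Ωnl, Jm (x - y) * (v y - v x)) =
        (∫ y in Ωnl, Jm (x - y) * v y) - m' x * v x := by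
      simp_rw [mul_sub]
      rw [integral_sub (hv'_int.bdd_mul (hJmx_aesm x _) (Filter.Eventually.of_forall fun y => hJm_norm _))
        (((hJmx_int x).restrict).mul_const (v x)), integral_mul_const, hm'def]
    rw [e1, e2]
  have hst₁ := hstruct f₁ u₁ v₁ hu₁ hv₁ hsol₁
  have hst₂ := hstruct f₂ u₂ v₂ hu₂ hv₂ hsol₂
  -- comparison of the exterior data terms
  have hP : ∀ x : EuclideanSpace ℝ (Fin N),
      (∫ y in Ωnlᶜ, Jm (x - y) * Set.indicator Ωl u₁ y) ≤
        ∫ y in Ωnlᶜ, Jm (x - y) * Set.indicator Ωl u₂ y := by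
    intro x
    have hae : ∀ᵐ y ∂(volume : Measure (EuclideanSpace ℝ (Fin N))),
        Set.indicator Ωl u₁ y ≤ Set.indicator Ωl u₂ y := by
      have h0 : (volume : Measure (EuclideanSpace ℝ (Fin N))) ({y | ¬ u₁ y ≤ u₂ y} ∩ Ωl) = 0 := by
        have := hu
        rwa [ae_iff, Measure.restrict_apply' hΩl_meas] at this
      rw [ae_iff]
      refine measure_mono_null ?_ h0
      intro y hy
      simp only [Set.mem_setOf_eq, not_le] at hy
      by_cases hyl : y ∈ Ωl
      · rw [Set.indicator_of_mem hyl, Set.indicator_of_mem hyl] at hy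
        exact ⟨fun h => absurd h (not_le.2 hy), hyl⟩
      · rw [Set.indicator_of_notMem hyl, Set.indicator_of_notMem hyl] at hy
        exact absurd hy (lt_irrefl 0)
    refine integral_mono_ae ((hJind_int x u₁ hu₁).integrableOn)
      ((hJind_int x u₂ hu₂).integrableOn) ?_
    filter_upwards [ae_restrict_of_ae hae] with y hy
    exact mul_le_mul_of_nonneg_left hy (hJm_nonneg _)
  -- the pointwise key inequality
  have key : ∀ᵐ x ∂(volume.restrict Ωnl), W x ^ 2 * (I' + m' x) ≤ W x * (2 * T' x) := by
    filter_upwards [hst₁, hst₂, hf, hWw] with x h1 h2 hfx hWx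
    have hTw : (∫ y in Ωnl, Jm (x - y) * v₁ y) - (∫ y in Ωnl, Jm (x - y) * v₂ y) =
        ∫ y in Ωnl, Jm (x - y) * w y := by
      rw [← integral_sub (hv₁_int.bdd_mul (hJmx_aesm x _) (Filter.Eventually.of_forall fun y => hJm_norm _))
        (hv₂_int.bdd_mul (hJmx_aesm x _) (Filter.Eventually.of_forall fun y => hJm_norm _))]
      apply integral_congr_ae
      exact Filter.Eventually.of_forall fun y => by rw [hwdef]; ring
    have hJw_int : Integrable (fun y => Jm (x - y) * w y) (volume.restrict Ωnl) :=
      (hw_mem.integrable one_le_two).bdd_mul (hJmx_aesm x _) (Filter.Eventually.of_forall fun y => hJm_norm _)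
    have hTwW : (∫ y in Ωnl, Jm (x - y) * w y) ≤ T' x := by
      refine integral_mono_ae hJw_int (hJW_int x) ?_
      filter_upwards [hwW] with y hy
      exact mul_le_mul_of_nonneg_left hy (hJm_nonneg _)
    have hkey1 : w x * (I' + m' x) ≤ 2 * T' x := by
      have e : w x * ((∫ y in Ωnlᶜ, Jm (x - y)) + 2 * m' x) =
          ((∫ y in Ωnlᶜ, Jm (x - y) * Set.indicator Ωl u₁ y) -
            ∫ y in Ωnlᶜ, Jm (x - y) * Set.indicator Ωl u₂ y) +
          2 * ((∫ y in Ωnl, Jm (x - y) * v₁ y) - ∫ y in Ωnl, Jm (x - y) * v₂ y) -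
          (f₂ x - f₁ x) := by
        rw [hwdef]
        linear_combination h1 - h2
      have e2 : w x * (I' + m' x) = w x * ((∫ y in Ωnlᶜ, Jm (x - y)) + 2 * m' x) := by
        rw [← ha'm' x]; ring
      rw [e2, e, hTw]
      have := hP x
      have h2T : (∫ y in Ωnl, Jm (x - y) * w y) ≤ T' x := hTwW
      linarith
    have hkey2 : W x * (I' + m' x) ≤ 2 * T' x := by
      rcases le_or_gt (w x) 0 with h | h
      · rw [hWx, max_eq_right h, zero_mul]
        positivity
      · rw [hWx, max_eq_left h.le]
        exact hkey1
    calc W x ^ 2 * (I' + m' x) = W x * (W x * (I' + m' x)) := by ring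
      _ ≤ W x * (2 * T' x) := mul_le_mul_of_nonneg_left hkey2 (hW_nonneg x)
  -- integrate the key inequality
  have hm'I_bound : ∀ x, ‖I' + m' x‖ ≤ I' + I' := by
    intro x
    rw [Real.norm_eq_abs, abs_of_nonneg (by linarith [hm'_nonneg x])]
    linarith [hm'_le x]
  have hL_int : Integrable (fun x => W x ^ 2 * (I' + m' x)) (volume.restrict Ωnl) := by
    have h := hW2_int.bdd_mul ((measurable_const.add hm'_sm.measurable).aestronglyMeasurable)
      (Filter.Eventually.of_forall hm'I_bound)
    exact h.congr (Filter.Eventually.of_forall fun x => by simp only [Pi.add_apply]; ring)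
  have hT'_bound : ∀ x, ‖2 * T' x‖ ≤ 2 * (M * ∫ y in Ωnl, W y) := by
    intro x
    rw [Real.norm_eq_abs, abs_of_nonneg (by linarith [hT'_nonneg x])]
    linarith [hT'_le x]
  have hR_int : Integrable (fun x => W x * (2 * T' x)) (volume.restrict Ωnl) := by
    have h := hW_int.bdd_mul ((hT'_sm.measurable.const_mul 2).aestronglyMeasurable)
      (Filter.Eventually.of_forall hT'_bound)
    exact h.congr (Filter.Eventually.of_forall fun x => by ring)
  have hIneq : (∫ x in Ωnl, W x ^ 2 * (I' + m' x)) ≤ ∫ x in Ωnl, W x * (2 * T' x) :=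
    integral_mono_ae hL_int hR_int key
  -- product-measure computations
  have hJmprod_aesm : AEStronglyMeasurable
      (fun p : EuclideanSpace ℝ (Fin N) × EuclideanSpace ℝ (Fin N) => Jm (p.1 - p.2))
      ((volume.restrict Ωnl).prod (volume.restrict Ωnl)) := hprod_meas.aestronglyMeasurable
  have hF1_int : Integrable
      (fun p : EuclideanSpace ℝ (Fin N) × EuclideanSpace ℝ (Fin N) =>
        W p.1 * (Jm (p.1 - p.2) * W p.2)) ((volume.restrict Ωnl).prod (volume.restrict Ωnl)) := by
    have h0 : Integrable (fun p : EuclideanSpace ℝ (Fin N) × EuclideanSpace ℝ (Fin N) =>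
        W p.1 * W p.2) ((volume.restrict Ωnl).prod (volume.restrict Ωnl)) :=
      hW_int.mul_prod hW_int
    have h1 := h0.bdd_mul hJmprod_aesm (Filter.Eventually.of_forall fun p => hJm_norm _)
    exact h1.congr (Filter.Eventually.of_forall fun p => by ring)
  have hF2_int : Integrable
      (fun p : EuclideanSpace ℝ (Fin N) × EuclideanSpace ℝ (Fin N) =>
        W p.1 ^ 2 * Jm (p.1 - p.2)) ((volume.restrict Ωnl).prod (volume.restrict Ωnl)) := by
    have h0 : Integrable (fun p : EuclideanSpace ℝ (Fin N) × EuclideanSpace ℝ (Fin N) =>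
        W p.1 ^ 2 * (1 : ℝ)) ((volume.restrict Ωnl).prod (volume.restrict Ωnl)) :=
      hW2_int.mul_prod (integrable_const 1)
    have h1 := (h0.congr (Filter.Eventually.of_forall fun p => (mul_one _))).bdd_mul
      hJmprod_aesm (Filter.Eventually.of_forall fun p => hJm_norm _)
    exact h1.congr (Filter.Eventually.of_forall fun p => by ring)
  have hF3_int : Integrable
      (fun p : EuclideanSpace ℝ (Fin N) × EuclideanSpace ℝ (Fin N) =>
        Jm (p.1 - p.2) * W p.2 ^ 2) ((volume.restrict Ωnl).prod (volume.restrict Ωnl)) := by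
    have h0 : Integrable (fun p : EuclideanSpace ℝ (Fin N) × EuclideanSpace ℝ (Fin N) =>
        (1 : ℝ) * W p.2 ^ 2) ((volume.restrict Ωnl).prod (volume.restrict Ωnl)) :=
      (integrable_const (1 : ℝ)).mul_prod hW2_int
    have h1 := (h0.congr (Filter.Eventually.of_forall fun p => (one_mul _))).bdd_mul
      hJmprod_aesm (Filter.Eventually.of_forall fun p => hJm_norm _)
    exact h1.congr (Filter.Eventually.of_forall fun p => by ring)
  have hF23_int : Integrable
      (fun p : EuclideanSpace ℝ (Fin N) × EuclideanSpace ℝ (Fin N) =>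
        W p.1 ^ 2 * Jm (p.1 - p.2) + Jm (p.1 - p.2) * W p.2 ^ 2)
      ((volume.restrict Ωnl).prod (volume.restrict Ωnl)) := hF2_int.add hF3_int
  have hF1'_int : Integrable
      (fun p : EuclideanSpace ℝ (Fin N) × EuclideanSpace ℝ (Fin N) =>
        2 * (W p.1 * (Jm (p.1 - p.2) * W p.2)))
      ((volume.restrict Ωnl).prod (volume.restrict Ωnl)) := hF1_int.const_mul 2
  have hF4_int : Integrable
      (fun p : EuclideanSpace ℝ (Fin N) × EuclideanSpace ℝ (Fin N) =>
        Jm (p.1 - p.2) * (W p.1 - W p.2) ^ 2)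
      ((volume.restrict Ωnl).prod (volume.restrict Ωnl)) := by
    exact (hF23_int.sub hF1'_int).congr
      (Filter.Eventually.of_forall fun p => by simp only [Pi.sub_apply]; ring)
  -- expansion of the Dirichlet form
  have hexp : (∫ p, Jm (p.1 - p.2) * (W p.1 - W p.2) ^ 2
        ∂((volume.restrict Ωnl).prod (volume.restrict Ωnl))) =
      (∫ p, W p.1 ^ 2 * Jm (p.1 - p.2) ∂((volume.restrict Ωnl).prod (volume.restrict Ωnl))) +
      (∫ p, Jm (p.1 - p.2) * W p.2 ^ 2 ∂((volume.restrict Ωnl).prod (volume.restrict Ωnl))) -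
      2 * ∫ p, W p.1 * (Jm (p.1 - p.2) * W p.2)
        ∂((volume.restrict Ωnl).prod (volume.restrict Ωnl)) := by
    rw [show (fun p : EuclideanSpace ℝ (Fin N) × EuclideanSpace ℝ (Fin N) =>
        Jm (p.1 - p.2) * (W p.1 - W p.2) ^ 2) =
        fun p => (W p.1 ^ 2 * Jm (p.1 - p.2) + Jm (p.1 - p.2) * W p.2 ^ 2) -
          2 * (W p.1 * (Jm (p.1 - p.2) * W p.2)) from funext fun p => by ring,
      integral_sub hF23_int hF1'_int, integral_add hF2_int hF3_int, integral_const_mul]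
  -- Fubini computations
  have hFub1 : (∫ p, W p.1 * (Jm (p.1 - p.2) * W p.2)
      ∂((volume.restrict Ωnl).prod (volume.restrict Ωnl))) = ∫ x in Ωnl, W x * T' x := by
    rw [integral_prod _ hF1_int]
    refine integral_congr_ae (Filter.Eventually.of_forall fun x => ?_)
    show (∫ y in Ωnl, W x * (Jm (x - y) * W y)) = W x * T' x
    rw [hT'def, integral_const_mul]
  have hFub2 : (∫ p, W p.1 ^ 2 * Jm (p.1 - p.2)
      ∂((volume.restrict Ωnl).prod (volume.restrict Ωnl))) = ∫ x in Ωnl, W x ^ 2 * m' x := by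
    rw [integral_prod _ hF2_int]
    refine integral_congr_ae (Filter.Eventually.of_forall fun x => ?_)
    show (∫ y in Ωnl, W x ^ 2 * Jm (x - y)) = W x ^ 2 * m' x
    rw [hm'def, integral_const_mul]
  have hFub3 : (∫ p, Jm (p.1 - p.2) * W p.2 ^ 2
      ∂((volume.restrict Ωnl).prod (volume.restrict Ωnl))) = ∫ y in Ωnl, m'' y * W y ^ 2 := by
    rw [integral_prod_symm _ hF3_int]
    refine integral_congr_ae (Filter.Eventually.of_forall fun y => ?_)
    show (∫ x in Ωnl, Jm (x - y) * W y ^ 2) = m'' y * W y ^ 2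
    rw [hm''def, integral_mul_const]
  -- integrability of the one-variable products
  have hWm'_int : Integrable (fun x => W x ^ 2 * m' x) (volume.restrict Ωnl) := by
    have h := hW2_int.bdd_mul hm'_sm.aestronglyMeasurable
      (Filter.Eventually.of_forall fun x => by rw [Real.norm_eq_abs, abs_of_nonneg (hm'_nonneg x)]; exact hm'_le x)
    exact h.congr (Filter.Eventually.of_forall fun x => by ring)
  have hWm''_int : Integrable (fun y => m'' y * W y ^ 2) (volume.restrict Ωnl) :=
    hW2_int.bdd_mul hm''_sm.aestronglyMeasurable
      (Filter.Eventually.of_forall fun y => by rw [Real.norm_eq_abs, abs_of_nonneg (hm''_nonneg y)]; exact hm''_le y)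
  have hWT'_int : Integrable (fun x => W x * T' x) (volume.restrict Ωnl) := by
    have h := hW_int.bdd_mul hT'_sm.aestronglyMeasurable
      (Filter.Eventually.of_forall fun x => by
        rw [Real.norm_eq_abs, abs_of_nonneg (hT'_nonneg x)]; exact hT'_le x)
    exact h.congr (Filter.Eventually.of_forall fun x => by ring)
  -- the chain of inequalities
  have hIW2_int : Integrable (fun x => I' * W x ^ 2) (volume.restrict Ωnl) :=
    hW2_int.const_mul I'
  have hLHSsplit : (∫ x in Ωnl, W x ^ 2 * (I' + m' x)) =
      I' * (∫ x in Ωnl, W x ^ 2) + ∫ x in Ωnl, W x ^ 2 * m' x := by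
    rw [← integral_const_mul, ← integral_add hIW2_int hWm'_int]
    exact integral_congr_ae (Filter.Eventually.of_forall fun x => by ring)
  have h2T_int : Integrable (fun x => 2 * (W x * T' x)) (volume.restrict Ωnl) :=
    hWT'_int.const_mul 2
  have hRHSsplit : (∫ x in Ωnl, W x * (2 * T' x)) = 2 * ∫ x in Ωnl, W x * T' x := by
    rw [← integral_const_mul]
    exact integral_congr_ae (Filter.Eventually.of_forall fun x => by ring)
  have hQ_nonneg : 0 ≤ ∫ p, Jm (p.1 - p.2) * (W p.1 - W p.2) ^ 2
      ∂((volume.restrict Ωnl).prod (volume.restrict Ωnl)) :=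
    integral_nonneg fun p => mul_nonneg (hJm_nonneg _) (sq_nonneg _)
  have hm''W_le : (∫ y in Ωnl, m'' y * W y ^ 2) ≤ I' * ∫ y in Ωnl, W y ^ 2 := by
    rw [← integral_const_mul]
    exact integral_mono_ae hWm''_int hIW2_int
      (Filter.Eventually.of_forall fun y =>
        mul_le_mul_of_nonneg_right (hm''_le y) (sq_nonneg _))
  have hIneq2 : I' * (∫ x in Ωnl, W x ^ 2) + (∫ x in Ωnl, W x ^ 2 * m' x) ≤
      2 * ∫ x in Ωnl, W x * T' x := by
    rw [← hLHSsplit, ← hRHSsplit]; exact hIneq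
  have hcomb : 2 * (∫ x in Ωnl, W x * T' x) =
      (∫ x in Ωnl, W x ^ 2 * m' x) + (∫ y in Ωnl, m'' y * W y ^ 2) -
      ∫ p, Jm (p.1 - p.2) * (W p.1 - W p.2) ^ 2
        ∂((volume.restrict Ωnl).prod (volume.restrict Ωnl)) := by
    rw [← hFub1, ← hFub2, ← hFub3]
    linarith [hexp]
  have hQ0 : (∫ p, Jm (p.1 - p.2) * (W p.1 - W p.2) ^ 2
      ∂((volume.restrict Ωnl).prod (volume.restrict Ωnl))) = 0 := by
    have := hIneq2
    rw [hcomb] at this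
    linarith [hm''W_le, hQ_nonneg]
  have hE0 : (∫ y in Ωnl, (I' - m'' y) * W y ^ 2) = 0 := by
    have heq : (∫ y in Ωnl, (I' - m'' y) * W y ^ 2) =
        (∫ y in Ωnl, I' * W y ^ 2) - ∫ y in Ωnl, m'' y * W y ^ 2 := by
      rw [← integral_sub hIW2_int hWm''_int]
      exact integral_congr_ae (Filter.Eventually.of_forall fun y => by ring)
    have hIa : (∫ y in Ωnl, I' * W y ^ 2) = I' * ∫ y in Ωnl, W y ^ 2 := integral_const_mul I' _
    have := hIneq2
    rw [hcomb, hQ0] at this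
    rw [heq, hIa]
    linarith [hm''W_le]
  -- a.e. pointwise consequences
  have hE_ae : ∀ᵐ y ∂(volume.restrict Ωnl), (I' - m'' y) * W y ^ 2 = 0 := by
    have h := (integral_eq_zero_iff_of_nonneg_ae
      (Filter.Eventually.of_forall fun y =>
        mul_nonneg (sub_nonneg.2 (hm''_le y)) (sq_nonneg _))
      ((hIW2_int.sub hWm''_int).congr
        (Filter.Eventually.of_forall fun y => by simp only [Pi.sub_apply]; ring))).1 hE0
    filter_upwards [h] with y hy using hy
  have hQ_ae : ∀ᵐ p ∂((volume.restrict Ωnl).prod (volume.restrict Ωnl)),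
      Jm (p.1 - p.2) * (W p.1 - W p.2) ^ 2 = 0 := by
    have h := (integral_eq_zero_iff_of_nonneg_ae
      (Filter.Eventually.of_forall fun p => mul_nonneg (hJm_nonneg _) (sq_nonneg _))
      hF4_int).1 hQ0
    filter_upwards [h] with p hp using hp
  -- transfer (J1) to Jm, and pull back to the product
  have hJc' : ∀ᵐ z ∂(volume : Measure (EuclideanSpace ℝ (Fin N))), ‖z‖ ≤ 2 * δ → c ≤ Jm z := by
    filter_upwards [hJm_ae] with z hz h
    rw [hz]; exact hJc z h
  have hpull : ∀ᵐ p ∂((volume.restrict Ωnl).prod (volume.restrict Ωnl)),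
      ‖p.1 - p.2‖ ≤ 2 * δ → c ≤ Jm (p.1 - p.2) :=
    aux_pull hJc' _ _ Measure.restrict_le_self Measure.restrict_le_self
  have hWeq : ∀ᵐ p ∂((volume.restrict Ωnl).prod (volume.restrict Ωnl)),
      dist p.1 p.2 ≤ 2 * δ → W p.1 = W p.2 := by
    filter_upwards [hQ_ae, hpull] with p h1 h2 hd
    have hJc2 : c ≤ Jm (p.1 - p.2) := h2 (by rw [← dist_eq_norm]; exact hd)
    rcases mul_eq_zero.1 h1 with h | h
    · exfalso
      rw [h] at hJc2
      linarith
    · exact sub_eq_zero.1 (pow_eq_zero_iff (two_ne_zero) |>.1 h)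
  -- Step D: W is a.e. constant on Ωnl
  have hμ_ne : volume.restrict Ωnl ≠ 0 := by
    intro h0
    have h1 : (volume.restrict Ωnl) Set.univ = volume Ωnl := by
      rw [Measure.restrict_apply_univ]
    have h2 : 0 < volume Ωnl := hΩnl_open.measure_pos volume ⟨y₀, hy₀⟩
    rw [h0] at h1
    simp at h1
    rw [← h1] at h2
    exact lt_irrefl _ h2
  have hball : ∀ z : EuclideanSpace ℝ (Fin N), ∃ k : ℝ, z ∈ Ωnl →
      ∀ᵐ x ∂(volume.restrict (ball z δ ∩ Ωnl)), W x = k := by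
    intro z
    by_cases hz : z ∈ Ωnl
    swap
    · exact ⟨0, fun h => absurd h hz⟩
    have hS_meas : MeasurableSet (ball z δ ∩ Ωnl) := measurableSet_ball.inter hΩnl_meas
    have hrr : volume.restrict (ball z δ ∩ Ωnl) =
        (volume.restrict Ωnl).restrict (ball z δ ∩ Ωnl) := by
      rw [Measure.restrict_restrict hS_meas, Set.inter_assoc, Set.inter_self]
    have hae : ∀ᵐ p ∂((volume.restrict (ball z δ ∩ Ωnl)).prod
        (volume.restrict (ball z δ ∩ Ωnl))), W p.1 = W p.2 := by
      rw [hrr, Measure.prod_restrict]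
      have h1 : ∀ᵐ p ∂(((volume.restrict Ωnl).prod (volume.restrict Ωnl)).restrict
          ((ball z δ ∩ Ωnl) ×ˢ (ball z δ ∩ Ωnl))), dist p.1 p.2 ≤ 2 * δ → W p.1 = W p.2 :=
        ae_restrict_of_ae hWeq
      have h2 : ∀ᵐ p ∂(((volume.restrict Ωnl).prod (volume.restrict Ωnl)).restrict
          ((ball z δ ∩ Ωnl) ×ˢ (ball z δ ∩ Ωnl))), p ∈ (ball z δ ∩ Ωnl) ×ˢ (ball z δ ∩ Ωnl) :=
        ae_restrict_mem (hS_meas.prod hS_meas)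
      filter_upwards [h1, h2] with p hp1 hp2
      apply hp1
      have d1 : dist p.1 z < δ := mem_ball.1 hp2.1.1
      have d2 : dist p.2 z < δ := mem_ball.1 hp2.2.1
      calc dist p.1 p.2 ≤ dist p.1 z + dist z p.2 := dist_triangle _ _ _
        _ = dist p.1 z + dist p.2 z := by rw [dist_comm z p.2]
        _ ≤ 2 * δ := by linarith
    have hne : volume.restrict (ball z δ ∩ Ωnl) ≠ 0 := by
      intro h0
      have h2 : 0 < volume (ball z δ ∩ Ωnl) :=
        (isOpen_ball.inter hΩnl_open).measure_pos volume ⟨z, mem_ball_self hδ, hz⟩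
      have h1 : (volume.restrict (ball z δ ∩ Ωnl)) Set.univ = volume (ball z δ ∩ Ωnl) := by
        rw [Measure.restrict_apply_univ]
      rw [h0] at h1
      simp at h1
      rw [← h1] at h2
      exact lt_irrefl _ h2
    obtain ⟨k, hk⟩ := aux_ae_const hne hae
    exact ⟨k, fun _ => hk⟩
  choose κ hκ using hball
  -- local constancy of κ
  have hloc : ∀ z ∈ Ωnl, ∀ z' ∈ Ωnl, dist z z' < δ → κ z = κ z' := by
    intro z hz z' hz' hd
    set S := ball z δ ∩ Ωnl
    set S' := ball z' δ ∩ Ωnl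
    have hSS'_meas : MeasurableSet (S ∩ S') :=
      (measurableSet_ball.inter hΩnl_meas).inter (measurableSet_ball.inter hΩnl_meas)
    have h1 : ∀ᵐ x ∂(volume.restrict (S ∩ S')), W x = κ z := by
      have hr : volume.restrict (S ∩ S') = (volume.restrict S).restrict (S ∩ S') := by
        rw [Measure.restrict_restrict hSS'_meas]
        exact congrArg _ (Set.inter_eq_left.2 Set.inter_subset_left).symm
      rw [hr]
      exact ae_restrict_of_ae (hκ z hz)
    have h2 : ∀ᵐ x ∂(volume.restrict (S ∩ S')), W x = κ z' := by
      have hr : volume.restrict (S ∩ S') = (volume.restrict S').restrict (S ∩ S') := by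
        rw [Measure.restrict_restrict hSS'_meas]
        exact congrArg _ (Set.inter_eq_left.2 Set.inter_subset_right).symm
      rw [hr]
      exact ae_restrict_of_ae (hκ z' hz')
    have hne : volume.restrict (S ∩ S') ≠ 0 := by
      intro h0
      have hzin : z ∈ S ∩ S' :=
        ⟨⟨mem_ball_self hδ, hz⟩, ⟨mem_ball.2 (by rwa [dist_comm] at hd ⊢), hz⟩⟩
      have h2' : 0 < volume (S ∩ S') :=
        ((isOpen_ball.inter hΩnl_open).inter (isOpen_ball.inter hΩnl_open)).measure_pos
          volume ⟨z, hzin⟩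
      have h1' : (volume.restrict (S ∩ S')) Set.univ = volume (S ∩ S') := by
        rw [Measure.restrict_apply_univ]
      rw [h0] at h1'
      simp at h1'
      rw [← h1'] at h2'
      exact lt_irrefl _ h2'
    haveI : (ae (volume.restrict (S ∩ S'))).NeBot := ae_neBot.2 hne
    obtain ⟨x, hx1, hx2⟩ := (h1.and h2).exists
    rw [← hx1, hx2]
  -- global constancy via δ-connectedness
  have hglob : ∀ z ∈ Ωnl, κ z = κ y₀ := by
    by_contra hcon
    push_neg at hcon
    obtain ⟨b, hb, hbne⟩ := hcon
    apply hΩnl_conn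
    refine ⟨{z | z ∈ Ωnl ∧ κ z = κ y₀}, {z | z ∈ Ωnl ∧ κ z ≠ κ y₀}, ?_, ?_, ⟨y₀, hy₀, rfl⟩,
      ⟨b, hb, hbne⟩, ?_, ?_, ?_⟩
    · rw [isOpen_iff_mem_nhds]
      intro z hz
      have hnb : ball z δ ∩ Ωnl ∈ nhds z :=
        Filter.inter_mem (ball_mem_nhds z hδ) (hΩnl_open.mem_nhds hz.1)
      refine Filter.mem_of_superset hnb fun z' hz' => ⟨hz'.2, ?_⟩
      have hdzz : dist z z' < δ := by rw [dist_comm]; exact mem_ball.1 hz'.1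
      rw [← hloc z hz.1 z' hz'.2 hdzz]
      exact hz.2
    · rw [isOpen_iff_mem_nhds]
      intro z hz
      have hnb : ball z δ ∩ Ωnl ∈ nhds z :=
        Filter.inter_mem (ball_mem_nhds z hδ) (hΩnl_open.mem_nhds hz.1)
      refine Filter.mem_of_superset hnb fun z' hz' => ⟨hz'.2, ?_⟩
      have hdzz : dist z z' < δ := by rw [dist_comm]; exact mem_ball.1 hz'.1
      rw [← hloc z hz.1 z' hz'.2 hdzz]
      exact hz.2
    · ext z
      constructor
      · rintro (⟨h, _⟩ | ⟨h, _⟩) <;> exact h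
      · intro hz
        by_cases h : κ z = κ y₀
        · exact Or.inl ⟨hz, h⟩
        · exact Or.inr ⟨hz, h⟩
    · ext z
      simp only [Set.mem_inter_iff, Set.mem_setOf_eq, Set.mem_empty_iff_false, iff_false]
      rintro ⟨⟨_, h1⟩, ⟨_, h2⟩⟩
      exact h2 h1
    · intro x hx y hy
      by_contra hlt
      push_neg at hlt
      have : κ x = κ y := hloc x hx.1 y hy.1 hlt
      exact hy.2 (by rw [← this]; exact hx.2)
  set k : ℝ := κ y₀ with hkdef
  -- W = k a.e. on Ωnl
  have hWk : ∀ᵐ x ∂(volume.restrict Ωnl), W x = k := by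
    obtain ⟨D0, hD0c, hD0d⟩ := TopologicalSpace.exists_countable_dense ↥Ωnl
    rw [ae_iff, Measure.restrict_apply' hΩnl_meas]
    have hcover : {x | ¬ W x = k} ∩ Ωnl ⊆
        ⋃ z ∈ D0, ({x | ¬ W x = k} ∩ (ball (z : EuclideanSpace ℝ (Fin N)) δ ∩ Ωnl)) := by
      rintro x ⟨hxW, hxΩ⟩
      obtain ⟨z, hz1, hz2⟩ := (Metric.dense_iff.1 hD0d) ⟨x, hxΩ⟩ δ hδ
      refine Set.mem_biUnion hz2 ⟨hxW, ?_, hxΩ⟩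
      have : dist (⟨x, hxΩ⟩ : ↥Ωnl) z < δ := mem_ball'.1 hz1
      rw [Subtype.dist_eq] at this
      exact mem_ball.2 (by rw [dist_comm] at this ⊢; exact this)
    refine measure_mono_null hcover ((measure_biUnion_null_iff hD0c).2 fun z hz => ?_)
    have hκz := hκ (z : EuclideanSpace ℝ (Fin N)) z.2
    rw [hglob (z : EuclideanSpace ℝ (Fin N)) z.2] at hκz
    have := hκz
    rw [ae_iff, Measure.restrict_apply' (measurableSet_ball.inter hΩnl_meas)] at this
    exact this
  -- Step E: k = 0
  have hA'_eq : ∀ y, I' - m'' y = ∫ x in Ωnlᶜ, Jm (x - y) := by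
    intro y
    have h := integral_add_compl hΩnl_meas (hJmy_int y)
    have h2 := hI'_eq2 y
    rw [hm''def]
    linarith [h, h2]
  have hk0 : k = 0 := by
    by_contra hkne
    set r : ℝ := δ - dist x₀ y₀ with hrdef
    have hr : 0 < r := sub_pos.2 hxy₀
    set G := ball y₀ r ∩ Ωnl with hGdef
    have hG_meas : MeasurableSet G := measurableSet_ball.inter hΩnl_meas
    have hrG : volume.restrict G = (volume.restrict Ωnl).restrict G := by
      rw [Measure.restrict_restrict hG_meas, Set.inter_assoc, Set.inter_self]
    have h1 : ∀ᵐ y ∂(volume.restrict G), (I' - m'' y) * W y ^ 2 = 0 := by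
      rw [hrG]; exact ae_restrict_of_ae hE_ae
    have h2 : ∀ᵐ y ∂(volume.restrict G), W y = k := by
      rw [hrG]; exact ae_restrict_of_ae hWk
    have h3 : ∀ᵐ y ∂(volume.restrict G), y ∈ G := ae_restrict_mem hG_meas
    have hne : volume.restrict G ≠ 0 := by
      intro h0
      have hpos : 0 < volume G :=
        (isOpen_ball.inter hΩnl_open).measure_pos volume ⟨y₀, mem_ball_self hr, hy₀⟩
      have h1' : (volume.restrict G) Set.univ = volume G := by rw [Measure.restrict_apply_univ]
      rw [h0] at h1'
      simp at h1'
      rw [← h1'] at hpos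
      exact lt_irrefl _ hpos
    haveI : (ae (volume.restrict G)).NeBot := ae_neBot.2 hne
    obtain ⟨y, hy1, hy2, hy3⟩ := (h1.and (h2.and h3)).exists
    -- the exterior integral is positive at y
    have hsubl : Ωl ∩ ball x₀ δ ⊆ Ωnlᶜ := by
      intro x hx hxnl
      have : x ∈ Ωl ∩ Ωnl := ⟨hx.1, hxnl⟩
      rw [hdisj] at this
      exact this
    have hposset : 0 < volume (Ωl ∩ ball x₀ δ) :=
      (hΩl_open.inter isOpen_ball).measure_pos volume ⟨x₀, hx₀, mem_ball_self hδ⟩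
    have hfinset : volume (Ωl ∩ ball x₀ δ) < ⊤ :=
      (hΩl_bdd.subset Set.inter_subset_left).measure_lt_top
    have hbnd : ∀ x ∈ Ωl ∩ ball x₀ δ, ‖x - y‖ ≤ 2 * δ := by
      intro x hx
      have d1 : dist x x₀ < δ := mem_ball.1 hx.2
      have d2 : dist y y₀ < r := mem_ball.1 hy3.1
      rw [← dist_eq_norm]
      calc dist x y ≤ dist x x₀ + dist x₀ y₀ + dist y₀ y := dist_triangle4 _ _ _ _
        _ = dist x x₀ + dist x₀ y₀ + dist y y₀ := by rw [dist_comm y₀ y]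
        _ ≤ 2 * δ := by rw [hrdef] at d2; linarith
    have hJc'' : ∀ᵐ x ∂(volume : Measure (EuclideanSpace ℝ (Fin N))),
        ‖x - y‖ ≤ 2 * δ → c ≤ Jm (x - y) :=
      (measurePreserving_sub_right volume y).quasiMeasurePreserving.ae hJc'
    have hlow : c * (volume (Ωl ∩ ball x₀ δ)).toReal ≤ ∫ x in Ωnlᶜ, Jm (x - y) := by
      have step1 : c * (volume (Ωl ∩ ball x₀ δ)).toReal = ∫ _ in Ωl ∩ ball x₀ δ, c := by
        rw [setIntegral_const, smul_eq_mul, mul_comm, measureReal_def]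
      have step2 : (∫ _ in Ωl ∩ ball x₀ δ, c) ≤ ∫ x in Ωl ∩ ball x₀ δ, Jm (x - y) := by
        haveI : Fact ((volume : Measure (EuclideanSpace ℝ (Fin N))) (Ωl ∩ ball x₀ δ) < ⊤) :=
          ⟨hfinset⟩
        refine integral_mono_ae (integrable_const c) ((hJmy_int y).integrableOn) ?_
        have hmem : ∀ᵐ x ∂(volume.restrict (Ωl ∩ ball x₀ δ)), x ∈ Ωl ∩ ball x₀ δ :=
          ae_restrict_mem (hΩl_meas.inter measurableSet_ball)
        filter_upwards [ae_restrict_of_ae hJc'', hmem] with x hx hxm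
        exact hx (hbnd x hxm)
      have step3 : (∫ x in Ωl ∩ ball x₀ δ, Jm (x - y)) ≤ ∫ x in Ωnlᶜ, Jm (x - y) :=
        setIntegral_mono_set ((hJmy_int y).integrableOn)
          (Filter.Eventually.of_forall fun x => hJm_nonneg _)
          (HasSubset.Subset.eventuallyLE hsubl)
      linarith [step1, step2, step3]
    have hApos : 0 < I' - m'' y := by
      rw [hA'_eq y]
      refine lt_of_lt_of_le ?_ hlow
      exact mul_pos hc (ENNReal.toReal_pos hposset.ne' hfinset.ne)
    -- contradiction
    rw [hy2] at hy1
    rcases mul_eq_zero.1 hy1 with h | h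
    · linarith
    · exact hkne (pow_eq_zero_iff two_ne_zero |>.1 h)
  -- conclusion
  filter_upwards [hWk, hWw] with x h1 h2
  have : max (w x) 0 = 0 := by rw [← h2, h1, hk0]
  have hw0 : w x ≤ 0 := by
    by_contra hpos
    push_neg at hpos
    rw [max_eq_left hpos.le] at this
    exact absurd this hpos.ne'
  have hw0' : v₁ x - v₂ x ≤ 0 := hw0
  linarith
end

section
/- Let H be a real Hilbert space and let V₁, V₂ be closed subspaces with V₁ ∩ V₂ = {0} and V₁ + V₂ = H. Let Q₁ and Q₂ denote the orthogonal projections onto the orthogonal complements V₁^⊥ and V₂^⊥ respectively. Then there exists δ ∈ [0, 1) such that ‖Q₁(Q₂ x)‖ ≤ δ ‖x‖ for every x ∈ H; consequently, for every x ∈ H and every n ∈ ℕ, ‖(Q₁ ∘ Q₂)^n x‖ ≤ δ^n ‖x‖, so the alternating iterates converge geometrically to 0. -/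
open Submodule RealInnerProductSpace

/-- Lions's geometric convergence for the alternating Schwarz method: if `V₁, V₂` are closed
subspaces of a real Hilbert space with `V₁ ∩ V₂ = {0}` and `V₁ + V₂ = H`, and `Q₁, Q₂` are
the orthogonal projections onto `V₁ᗮ` and `V₂ᗮ`, then `Q₁ ∘ Q₂` is a contraction with some
factor `δ < 1`, and consequently the alternating iterates tend to `0` geometrically. -/
theorem schwarz_alternating_geometric_convergence
    {H : Type*} [NormedAddCommGroup H] [InnerProductSpace ℝ H] [CompleteSpace H]
    (V₁ V₂ : Submodule ℝ H)
    (hV₁ : IsClosed (V₁ : Set H)) (hV₂ : IsClosed (V₂ : Set H))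
    (hinf : V₁ ⊓ V₂ = ⊥) (hsup : V₁ ⊔ V₂ = ⊤)
    (Q₁ Q₂ : H → H)
    (hQ₁ : ∀ x, Q₁ x ∈ V₁ᗮ ∧ x - Q₁ x ∈ V₁)
    (hQ₂ : ∀ x, Q₂ x ∈ V₂ᗮ ∧ x - Q₂ x ∈ V₂) :
    ∃ δ : ℝ, 0 ≤ δ ∧ δ < 1 ∧ (∀ x : H, ‖Q₁ (Q₂ x)‖ ≤ δ * ‖x‖) ∧
      ∀ (x : H) (n : ℕ), ‖(Q₁ ∘ Q₂)^[n] x‖ ≤ δ ^ n * ‖x‖ := by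
  have hcompl : IsCompl V₁ V₂ := ⟨disjoint_iff.2 hinf, codisjoint_iff.2 hsup⟩
  obtain ⟨C, hC1, hPbound, hPsub⟩ :
      ∃ C : ℝ, 1 ≤ C ∧ (∀ z : H, ∃ w ∈ V₁, ‖w‖ ≤ C * ‖z‖ ∧ z - w ∈ V₂) ∧ True := by
    refine ⟨max ‖V₁.linearProjOfClosedCompl V₂ hcompl hV₁ hV₂‖ 1, le_max_right _ _, ?_, trivial⟩
    intro z
    refine ⟨(V₁.linearProjOfClosedCompl V₂ hcompl hV₁ hV₂ z : H), Submodule.coe_mem _, ?_, ?_⟩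
    · calc ‖((V₁.linearProjOfClosedCompl V₂ hcompl hV₁ hV₂) z : H)‖
          = ‖(V₁.linearProjOfClosedCompl V₂ hcompl hV₁ hV₂) z‖ := rfl
      _ ≤ ‖V₁.linearProjOfClosedCompl V₂ hcompl hV₁ hV₂‖ * ‖z‖ :=
          (V₁.linearProjOfClosedCompl V₂ hcompl hV₁ hV₂).le_opNorm z
      _ ≤ max ‖V₁.linearProjOfClosedCompl V₂ hcompl hV₁ hV₂‖ 1 * ‖z‖ :=
          mul_le_mul_of_nonneg_right (le_max_left _ _) (norm_nonneg z)
    · have heq : (V₁.projectionOnto V₂ hcompl z : H) + (V₂.projectionOnto V₁ hcompl.symm z : H) = z :=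
        Submodule.projection_add_projection_eq_self hcompl z
      have : z - ((V₁.linearProjOfClosedCompl V₂ hcompl hV₁ hV₂) z : H)
          = (V₂.projectionOnto V₁ hcompl.symm z : H) := by
        rw [Submodule.coe_continuous_linearProjOfClosedCompl']
        linear_combination (norm := module) -heq
      rw [this]
      exact Submodule.coe_mem _
  have hC0 : (0 : ℝ) < C := lt_of_lt_of_le one_pos hC1
  -- Q₂ is norm-nonincreasing (Pythagoras)
  have hQ2norm : ∀ x, ‖Q₂ x‖ ≤ ‖x‖ := by
    intro x
    obtain ⟨h1, h2⟩ := hQ₂ x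
    have horth : ⟪x - Q₂ x, Q₂ x⟫ = 0 :=
      (Submodule.mem_orthogonal _ _).1 h1 (x - Q₂ x) h2
    have hpyth : ‖x‖ ^ 2 = ‖x - Q₂ x‖ ^ 2 + ‖Q₂ x‖ ^ 2 := by
      have := norm_add_sq_real (x - Q₂ x) (Q₂ x)
      simp only [sub_add_cancel, horth] at this
      linarith
    nlinarith [norm_nonneg (Q₂ x), norm_nonneg x, norm_nonneg (x - Q₂ x)]
  -- key contraction on V₂ᗮ
  obtain ⟨δ, hδdef⟩ : ∃ δ : ℝ, δ = Real.sqrt (1 - 1 / C ^ 2) := ⟨_, rfl⟩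
  have harg0 : 0 ≤ 1 - 1 / C ^ 2 := by
    have : 1 / C ^ 2 ≤ 1 := by
      rw [div_le_one (by positivity)]
      nlinarith
    linarith
  have hδ0 : 0 ≤ δ := hδdef ▸ Real.sqrt_nonneg _
  have hδsq : δ ^ 2 = 1 - 1 / C ^ 2 := by rw [hδdef]; exact Real.sq_sqrt harg0
  have hδ1 : δ < 1 := by
    have harglt : 1 - 1 / C ^ 2 < 1 := by
      have : 0 < 1 / C ^ 2 := by positivity
      linarith
    calc δ = Real.sqrt (1 - 1 / C ^ 2) := hδdef
    _ < Real.sqrt 1 := Real.sqrt_lt_sqrt harg0 harglt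
    _ = 1 := Real.sqrt_one
  have hkey : ∀ y : H, y ∈ V₂ᗮ → ‖Q₁ y‖ ≤ δ * ‖y‖ := by
    intro y hy
    obtain ⟨h1, h2⟩ := hQ₁ y
    obtain ⟨w, hwV₁, hwnorm, hsub⟩ := hPbound y
    have hyy : ⟪y, y⟫ = ⟪y, w⟫ := by
      have h0 : ⟪y - w, y⟫ = 0 :=
        (Submodule.mem_orthogonal _ _).1 hy _ hsub
      rw [inner_sub_left] at h0
      linarith [real_inner_comm y w]
    -- ⟪y, w⟫ = ⟪y - Q₁ y, w⟫ since Q₁ y ⊥ V₁ ∋ w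
    have hyP : ⟪y, w⟫ = ⟪y - Q₁ y, w⟫ := by
      have h0 : ⟪w, Q₁ y⟫ = 0 :=
        (Submodule.mem_orthogonal _ _).1 h1 _ hwV₁
      rw [inner_sub_left]
      linarith [real_inner_comm w (Q₁ y)]
    have hineq : ‖y‖ ^ 2 ≤ ‖y - Q₁ y‖ * (C * ‖y‖) := by
      have h1' : ‖y‖ ^ 2 = ⟪y - Q₁ y, w⟫ := by
        rw [← hyP, ← hyy, real_inner_self_eq_norm_sq]
      have h2' : ⟪y - Q₁ y, w⟫ ≤ ‖y - Q₁ y‖ * ‖w‖ :=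
        real_inner_le_norm _ _
      nlinarith [norm_nonneg (y - Q₁ y), norm_nonneg w]
    -- so C * ‖y - Q₁ y‖ ≥ ‖y‖
    have hlow : ‖y‖ ≤ C * ‖y - Q₁ y‖ := by
      rcases eq_or_lt_of_le (norm_nonneg y) with h | h
      · have := mul_nonneg (le_of_lt hC0) (norm_nonneg (y - Q₁ y))
        linarith
      · nlinarith [hineq, h]
    -- Pythagoras for Q₁
    have horth : ⟪y - Q₁ y, Q₁ y⟫ = 0 :=
      (Submodule.mem_orthogonal _ _).1 h1 _ h2
    have hpyth : ‖y‖ ^ 2 = ‖y - Q₁ y‖ ^ 2 + ‖Q₁ y‖ ^ 2 := by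
      have := norm_add_sq_real (y - Q₁ y) (Q₁ y)
      simp only [sub_add_cancel, horth] at this
      linarith
    have hsq : ‖Q₁ y‖ ^ 2 ≤ (δ * ‖y‖) ^ 2 := by
      have h1' : ‖y‖ ^ 2 ≤ C ^ 2 * ‖y - Q₁ y‖ ^ 2 := by
        nlinarith [norm_nonneg y, norm_nonneg (y - Q₁ y)]
      have h2' : ‖Q₁ y‖ ^ 2 ≤ ‖y‖ ^ 2 - ‖y‖ ^ 2 / C ^ 2 := by
        have hC2 : (0 : ℝ) < C ^ 2 := by positivity
        have : ‖y‖ ^ 2 / C ^ 2 ≤ ‖y - Q₁ y‖ ^ 2 := by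
          rw [div_le_iff₀ hC2]; nlinarith
        linarith
      have : (δ * ‖y‖) ^ 2 = ‖y‖ ^ 2 - ‖y‖ ^ 2 / C ^ 2 := by
        rw [mul_pow, hδsq]; ring
      linarith
    nlinarith [norm_nonneg (Q₁ y), mul_nonneg hδ0 (norm_nonneg y)]
  have hmain : ∀ x : H, ‖Q₁ (Q₂ x)‖ ≤ δ * ‖x‖ := by
    intro x
    calc ‖Q₁ (Q₂ x)‖ ≤ δ * ‖Q₂ x‖ := hkey _ (hQ₂ x).1
    _ ≤ δ * ‖x‖ := by
        have := hQ2norm x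
        nlinarith
  refine ⟨δ, hδ0, hδ1, hmain, ?_⟩
  intro x n
  induction n with
  | zero => simp
  | succ n ih =>
    rw [Function.iterate_succ_apply']
    calc ‖(Q₁ ∘ Q₂) ((Q₁ ∘ Q₂)^[n] x)‖ = ‖Q₁ (Q₂ ((Q₁ ∘ Q₂)^[n] x))‖ := rfl
    _ ≤ δ * ‖(Q₁ ∘ Q₂)^[n] x‖ := hmain _
    _ ≤ δ * (δ ^ n * ‖x‖) := by nlinarith [norm_nonneg ((Q₁ ∘ Q₂)^[n] x)]
    _ = δ ^ (n + 1) * ‖x‖ := by ring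
end

section
/- Let H be a real Hilbert space and let V₁, V₂ be closed subspaces such that V₁ + V₂ is dense in H. Let Q₁ and Q₂ denote the orthogonal projections onto V₁^⊥ and V₂^⊥ respectively. Then for every x ∈ H the sequence (Q₁ ∘ Q₂)^n x converges to 0 in norm as n → ∞. -/
open Submodule Filter Topology

section AuxProj

variable {H : Type*} [NormedAddCommGroup H] [InnerProductSpace ℝ H]
variable {W : Submodule ℝ H} {Q : H → H}

local notation "⟪" x ", " y "⟫" => @inner ℝ _ _ x y

lemma proj_inner_zero (horth : ∀ x, x - Q x ∈ Wᗮ) (x : H) {w : H} (hw : w ∈ W) :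
    ⟪x - Q x, w⟫ = 0 := by
  have := (Submodule.mem_orthogonal W (x - Q x)).mp (horth x) w hw
  rwa [real_inner_comm] at this

lemma proj_selfadj (hmem : ∀ x, Q x ∈ W) (horth : ∀ x, x - Q x ∈ Wᗮ) (x y : H) :
    ⟪Q x, y⟫ = ⟪x, Q y⟫ := by
  have h1 : ⟪Q x, y - Q y⟫ = 0 := by
    rw [real_inner_comm]; exact proj_inner_zero horth y (hmem x)
  have h2 : ⟪x - Q x, Q y⟫ = 0 := proj_inner_zero horth x (hmem y)
  rw [inner_sub_right] at h1
  rw [inner_sub_left] at h2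
  linarith

lemma proj_inner_self (hmem : ∀ x, Q x ∈ W) (horth : ∀ x, x - Q x ∈ Wᗮ) (x : H) :
    ⟪Q x, x⟫ = ‖Q x‖ ^ 2 := by
  have h1 : ⟪Q x, x - Q x⟫ = 0 := by
    rw [real_inner_comm]; exact proj_inner_zero horth x (hmem x)
  rw [inner_sub_right] at h1
  have h2 : ⟪Q x, Q x⟫ = ‖Q x‖ ^ 2 := real_inner_self_eq_norm_sq (Q x)
  linarith

lemma proj_pythagoras (hmem : ∀ x, Q x ∈ W) (horth : ∀ x, x - Q x ∈ Wᗮ) (x : H) :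
    ‖x‖ ^ 2 = ‖Q x‖ ^ 2 + ‖x - Q x‖ ^ 2 := by
  have h0 : ⟪Q x, x - Q x⟫ = 0 := by
    rw [real_inner_comm]; exact proj_inner_zero horth x (hmem x)
  have := norm_add_sq_real (Q x) (x - Q x)
  have e : Q x + (x - Q x) = x := by abel
  rw [e, h0] at this
  linarith

lemma proj_norm_le (hmem : ∀ x, Q x ∈ W) (horth : ∀ x, x - Q x ∈ Wᗮ) (x : H) :
    ‖Q x‖ ≤ ‖x‖ := by
  have h := proj_pythagoras hmem horth x
  nlinarith [norm_nonneg (Q x), norm_nonneg x, sq_nonneg (‖x - Q x‖)]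

lemma proj_fix_of_norm_eq (hmem : ∀ x, Q x ∈ W) (horth : ∀ x, x - Q x ∈ Wᗮ) {x : H}
    (h : ‖Q x‖ = ‖x‖) : Q x = x := by
  have hp := proj_pythagoras hmem horth x
  have : ‖x - Q x‖ ^ 2 = 0 := by rw [h] at hp; linarith
  have : ‖x - Q x‖ = 0 := by nlinarith [norm_nonneg (x - Q x)]
  have := norm_eq_zero.mp this
  have : x = Q x := by rwa [sub_eq_zero] at this
  exact this.symm

lemma proj_fix_of_mem (hmem : ∀ x, Q x ∈ W) (horth : ∀ x, x - Q x ∈ Wᗮ) {x : H}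
    (h : x ∈ W) : Q x = x := by
  have h1 : ⟪x - Q x, x⟫ = 0 := proj_inner_zero horth x h
  have h2 : ⟪x - Q x, Q x⟫ = 0 := proj_inner_zero horth x (hmem x)
  have h3 : ⟪x - Q x, x - Q x⟫ = 0 := by rw [inner_sub_right]; linarith
  have := inner_self_eq_zero (𝕜 := ℝ).mp h3
  rw [sub_eq_zero] at this
  exact this.symm

lemma proj_lipschitz (hmem : ∀ x, Q x ∈ W) (horth : ∀ x, x - Q x ∈ Wᗮ) (a b : H) :
    ‖Q a - Q b‖ ≤ ‖a - b‖ := by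
  have hW : Q a - Q b ∈ W := W.sub_mem (hmem a) (hmem b)
  have hperp : (a - b) - (Q a - Q b) ∈ Wᗮ := by
    have h := Wᗮ.sub_mem (horth a) (horth b)
    have e : a - Q a - (b - Q b) = (a - b) - (Q a - Q b) := by abel
    rwa [e] at h
  have h0 : ⟪Q a - Q b, (a - b) - (Q a - Q b)⟫ = 0 :=
    (Submodule.mem_orthogonal W _).mp hperp _ hW
  have key := norm_add_sq_real (Q a - Q b) ((a - b) - (Q a - Q b))
  have e : Q a - Q b + ((a - b) - (Q a - Q b)) = a - b := by abel
  rw [e, h0] at key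
  nlinarith [norm_nonneg (Q a - Q b), norm_nonneg (a - b),
    sq_nonneg ‖(a - b) - (Q a - Q b)‖]

end AuxProj

/-- Lions's strong convergence for the alternating Schwarz method: if `V₁, V₂` are closed
subspaces of a real Hilbert space with `V₁ + V₂` dense in `H`, and `Q₁, Q₂` are the
orthogonal projections onto `V₁ᗮ` and `V₂ᗮ`, then `(Q₁ ∘ Q₂)^n x → 0` for every `x`. -/
theorem schwarz_alternating_strong_convergence
    {H : Type*} [NormedAddCommGroup H] [InnerProductSpace ℝ H] [CompleteSpace H]
    (V₁ V₂ : Submodule ℝ H)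
    (hV₁ : IsClosed (V₁ : Set H)) (hV₂ : IsClosed (V₂ : Set H))
    (hdense : Dense ((V₁ ⊔ V₂ : Submodule ℝ H) : Set H))
    (Q₁ Q₂ : H → H)
    (hQ₁ : ∀ x, Q₁ x ∈ V₁ᗮ ∧ x - Q₁ x ∈ V₁)
    (hQ₂ : ∀ x, Q₂ x ∈ V₂ᗮ ∧ x - Q₂ x ∈ V₂) :
    ∀ x : H, Tendsto (fun n : ℕ => (Q₁ ∘ Q₂)^[n] x) atTop (𝓝 0) := by
  intro x
  have hm₁ : ∀ y, Q₁ y ∈ V₁ᗮ := fun y => (hQ₁ y).1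
  have ho₁ : ∀ y, y - Q₁ y ∈ V₁ᗮᗮ := fun y => V₁.le_orthogonal_orthogonal (hQ₁ y).2
  have hm₂ : ∀ y, Q₂ y ∈ V₂ᗮ := fun y => (hQ₂ y).1
  have ho₂ : ∀ y, y - Q₂ y ∈ V₂ᗮᗮ := fun y => V₂.le_orthogonal_orthogonal (hQ₂ y).2
  set S : H → H := fun a => Q₂ (Q₁ (Q₂ a)) with hSdef
  set y : H := Q₂ x with hydef
  -- self-adjointness of S
  have Ssa : ∀ a b : H, (inner ℝ (S a) b : ℝ) = inner ℝ a (S b) := by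
    intro a b
    calc (inner ℝ (S a) b : ℝ) = inner ℝ (Q₁ (Q₂ a)) (Q₂ b) := proj_selfadj hm₂ ho₂ _ _
      _ = inner ℝ (Q₂ a) (Q₁ (Q₂ b)) := proj_selfadj hm₁ ho₁ _ _
      _ = inner ℝ a (Q₂ (Q₁ (Q₂ b))) := proj_selfadj hm₂ ho₂ _ _
  -- norm facts
  have Snorm : ∀ a : H, ‖S a‖ ≤ ‖a‖ := by
    intro a
    calc ‖S a‖ ≤ ‖Q₁ (Q₂ a)‖ := proj_norm_le hm₂ ho₂ _
      _ ≤ ‖Q₂ a‖ := proj_norm_le hm₁ ho₁ _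
      _ ≤ ‖a‖ := proj_norm_le hm₂ ho₂ _
  have Spos : ∀ a : H, (inner ℝ (S a) a : ℝ) = ‖Q₁ (Q₂ a)‖ ^ 2 := by
    intro a
    calc (inner ℝ (S a) a : ℝ) = inner ℝ (Q₁ (Q₂ a)) (Q₂ a) := proj_selfadj hm₂ ho₂ _ _
      _ = ‖Q₁ (Q₂ a)‖ ^ 2 := proj_inner_self hm₁ ho₁ _
  have Skey : ∀ a : H, ‖S a‖ ^ 2 ≤ (inner ℝ (S a) a : ℝ) := by
    intro a
    rw [Spos a]
    have h1 : ‖S a‖ ≤ ‖Q₁ (Q₂ a)‖ := proj_norm_le hm₂ ho₂ _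
    nlinarith [norm_nonneg (S a), norm_nonneg (Q₁ (Q₂ a))]
  -- shift lemma for iterates
  have Sshift : ∀ (n : ℕ) (u v : H), (inner ℝ (S^[n] u) v : ℝ) = inner ℝ u (S^[n] v) := by
    intro n
    induction n with
    | zero => intro u v; simp
    | succ n ih =>
      intro u v
      rw [Function.iterate_succ_apply', Function.iterate_succ_apply]
      rw [Ssa (S^[n] u) v, ih u (S v)]
  have Sadd : ∀ m n : ℕ, (inner ℝ (S^[m + n] y) y : ℝ) = inner ℝ (S^[m] y) (S^[n] y) := by
    intro m n
    rw [Function.iterate_add_apply]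
    rw [Sshift m (S^[n] y) y]
    exact real_inner_comm _ _
  set c : ℕ → ℝ := fun k => (inner ℝ (S^[k] y) y : ℝ) with hcdef
  have hc_even : ∀ j : ℕ, c (2 * j) = ‖S^[j] y‖ ^ 2 := by
    intro j
    show (inner ℝ (S^[2 * j] y) y : ℝ) = _
    rw [two_mul, Sadd j j, real_inner_self_eq_norm_sq]
  have hc_odd : ∀ j : ℕ, c (2 * j + 1) = (inner ℝ (S (S^[j] y)) (S^[j] y) : ℝ) := by
    intro j
    show (inner ℝ (S^[2 * j + 1] y) y : ℝ) = _
    have e : 2 * j + 1 = (j + 1) + j := by ring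
    rw [e, Sadd (j + 1) j, Function.iterate_succ_apply']
  have hc_nonneg : ∀ k : ℕ, 0 ≤ c k := by
    intro k
    rcases Nat.even_or_odd k with ⟨j, hj⟩ | ⟨j, hj⟩
    · rw [hj, ← two_mul, hc_even]; positivity
    · rw [hj, hc_odd j, Spos]; positivity
  have hc_anti : Antitone c := by
    apply antitone_nat_of_succ_le
    intro k
    rcases Nat.even_or_odd k with ⟨j, hj⟩ | ⟨j, hj⟩
    · -- k = 2j : c (2j+1) ≤ c (2j)
      have hk : k = 2 * j := by omega
      have e1 : c (k + 1) = inner ℝ (S (S^[j] y)) (S^[j] y) := by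
        rw [hk]; exact hc_odd j
      have e2 : c k = ‖S^[j] y‖ ^ 2 := by rw [hk]; exact hc_even j
      rw [e1, e2]
      have h1 := real_inner_le_norm (S (S^[j] y)) (S^[j] y)
      have h2 := Snorm (S^[j] y)
      nlinarith [norm_nonneg (S^[j] y)]
    · -- k = 2j+1 : c (2j+2) ≤ c (2j+1)
      have hk : k = 2 * j + 1 := by omega
      have e1 : c (k + 1) = ‖S (S^[j] y)‖ ^ 2 := by
        have hk1 : k + 1 = 2 * (j + 1) := by omega
        rw [hk1, hc_even (j + 1), Function.iterate_succ_apply']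
      have e2 : c k = inner ℝ (S (S^[j] y)) (S^[j] y) := by
        rw [hk]; exact hc_odd j
      rw [e1, e2]
      exact Skey (S^[j] y)
  -- convergence of c
  set L : ℝ := ⨅ k, c k with hLdef
  have hbdd : BddBelow (Set.range c) := ⟨0, by rintro _ ⟨k, rfl⟩; exact hc_nonneg k⟩
  have hcL : Tendsto c atTop (𝓝 L) := tendsto_atTop_ciInf hc_anti hbdd
  have hLle : ∀ k, L ≤ c k := fun k => ciInf_le hbdd k
  -- distance formula
  have hdist : ∀ m n : ℕ, dist (S^[n] y) (S^[m] y) ^ 2 = c (2 * n) - 2 * c (n + m) + c (2 * m) := by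
    intro m n
    rw [dist_eq_norm]
    have h := norm_sub_sq_real (S^[n] y) (S^[m] y)
    rw [h, ← hc_even n, ← hc_even m, ← Sadd n m]
    try ring_nf
  -- Cauchy
  have hcauchy : CauchySeq (fun n : ℕ => S^[n] y) := by
    rw [Metric.cauchySeq_iff']
    intro ε hε
    have h2L : Tendsto (fun m : ℕ => c (2 * m)) atTop (𝓝 L) :=
      hcL.comp (tendsto_atTop_atTop_of_monotone (fun a b hab => by omega)
        (fun b => ⟨b, by omega⟩))
    have : ∀ᶠ m in atTop, c (2 * m) < L + ε ^ 2 := by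
      apply h2L.eventually_lt_const
      nlinarith
    obtain ⟨N, hN⟩ := this.exists
    refine ⟨N, fun n hn => ?_⟩
    have hd := hdist N n
    have h1 : c (2 * n) ≥ L := hLle _
    have h2 : c (2 * n) ≤ c (n + N) := hc_anti (show n + N ≤ 2 * n by omega)
    have h3 : c (n + N) ≤ c (2 * N) := hc_anti (show 2 * N ≤ n + N by omega)
    have hsq : dist (S^[n] y) (S^[N] y) ^ 2 < ε ^ 2 := by
      rw [hd]
      nlinarith [hLle (2 * N)]
    exact lt_of_pow_lt_pow_left₀ 2 (le_of_lt hε) hsq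
  obtain ⟨z, hz⟩ := cauchySeq_tendsto_of_complete hcauchy
  -- S is continuous (1-Lipschitz)
  have Slip : LipschitzWith 1 S := by
    apply LipschitzWith.of_dist_le_mul
    intro a b
    simp only [NNReal.coe_one, one_mul, dist_eq_norm]
    calc ‖S a - S b‖ ≤ ‖Q₁ (Q₂ a) - Q₁ (Q₂ b)‖ := proj_lipschitz hm₂ ho₂ _ _
      _ ≤ ‖Q₂ a - Q₂ b‖ := proj_lipschitz hm₁ ho₁ _ _
      _ ≤ ‖a - b‖ := proj_lipschitz hm₂ ho₂ _ _
  have hSz : S z = z := by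
    have h1 : Tendsto (fun n : ℕ => S (S^[n] y)) atTop (𝓝 (S z)) :=
      (Slip.continuous.tendsto z).comp hz
    have h2 : Tendsto (fun n : ℕ => S (S^[n] y)) atTop (𝓝 z) := by
      have : (fun n : ℕ => S (S^[n] y)) = fun n : ℕ => S^[n + 1] y := by
        funext n; rw [Function.iterate_succ_apply']
      rw [this]
      exact (tendsto_add_atTop_iff_nat 1).mpr hz
    exact tendsto_nhds_unique h1 h2
  -- z = 0
  have hz0 : z = 0 := by
    have hch1 : ‖S z‖ ≤ ‖Q₁ (Q₂ z)‖ := proj_norm_le hm₂ ho₂ _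
    have hch2 : ‖Q₁ (Q₂ z)‖ ≤ ‖Q₂ z‖ := proj_norm_le hm₁ ho₁ _
    have hch3 : ‖Q₂ z‖ ≤ ‖z‖ := proj_norm_le hm₂ ho₂ _
    have hSzn : ‖S z‖ = ‖z‖ := by rw [hSz]
    have hQ₂z : Q₂ z = z := by
      apply proj_fix_of_norm_eq hm₂ ho₂
      linarith
    have hQ₁z : Q₁ z = z := by
      apply proj_fix_of_norm_eq hm₁ ho₁
      rw [hQ₂z] at hch1 hch2
      linarith
    have hzV₁ : z ∈ V₁ᗮ := hQ₁z ▸ hm₁ z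
    have hzV₂ : z ∈ V₂ᗮ := hQ₂z ▸ hm₂ z
    have hzsup : z ∈ (V₁ ⊔ V₂)ᗮ := by
      rw [Submodule.mem_orthogonal]
      intro u hu
      rw [Submodule.mem_sup] at hu
      obtain ⟨a, ha, b, hb, rfl⟩ := hu
      rw [inner_add_left]
      rw [(Submodule.mem_orthogonal V₁ z).mp hzV₁ a ha,
        (Submodule.mem_orthogonal V₂ z).mp hzV₂ b hb]
      ring
    have hbot : (V₁ ⊔ V₂)ᗮ = ⊥ := by
      rw [← Submodule.topologicalClosure_eq_top_iff]
      exact Submodule.dense_iff_topologicalClosure_eq_top.mp hdense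
    rw [hbot] at hzsup
    exact Submodule.mem_bot ℝ |>.mp hzsup
  rw [hz0] at hz
  -- membership of iterates
  have memS : ∀ n : ℕ, S^[n] y ∈ V₂ᗮ := by
    intro n
    induction n with
    | zero => exact hm₂ x
    | succ n ih => rw [Function.iterate_succ_apply']; exact hm₂ _
  have iterEq : ∀ n : ℕ, (Q₁ ∘ Q₂)^[n + 1] x = Q₁ (S^[n] y) := by
    intro n
    induction n with
    | zero => simp [hydef]
    | succ n ih =>
      rw [Function.iterate_succ_apply', ih, Function.comp_apply,
        Function.iterate_succ_apply', hSdef]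
      have hfix : Q₂ (S^[n] y) = S^[n] y := proj_fix_of_mem hm₂ ho₂ (memS n)
      simp only []
      rw [hfix]
  -- conclude
  have hnorm : Tendsto (fun n : ℕ => ‖(Q₁ ∘ Q₂)^[n + 1] x‖) atTop (𝓝 0) := by
    have hb : ∀ n : ℕ, ‖(Q₁ ∘ Q₂)^[n + 1] x‖ ≤ ‖S^[n] y‖ := by
      intro n
      rw [iterEq n]
      exact proj_norm_le hm₁ ho₁ _
    have hS0 : Tendsto (fun n : ℕ => ‖S^[n] y‖) atTop (𝓝 0) := by
      have := hz.norm
      simpa using this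
    exact squeeze_zero (fun n => norm_nonneg _) hb hS0
  have h1 : Tendsto (fun n : ℕ => (Q₁ ∘ Q₂)^[n + 1] x) atTop (𝓝 0) :=
    tendsto_zero_iff_norm_tendsto_zero.mpr hnorm
  exact (tendsto_add_atTop_iff_nat 1).mp h1
end
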